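/- arXiv:1304.0172 — 5 statements merged into one kernel-verified Lean document; each statement's English description precedes it below -/
import Mathlib

section
/- Let F be a field of characteristic p > 0 with #F ≥ n and n ≥ 2. The smallest non-empty nucleus of the normal rational curve V_1^n is a single point if and only if n = 2p^i − 2 for some i ∈ ℕ; in that case this point is F·c_{p^i − 1}. -/
open Finset

namespace SNP

variable {p : ℕ}

lemma not_dvd_choose_small (hp : p.Prime) {a b : ℕ} (ha : a < p) (hba : b ≤ a) :
    ¬ p ∣ a.choose b := by
  intro h
  have h2 : p ∣ a.choose b * b.factorial * (a - b).factorial := Dvd.dvd.mul_right (h.mul_right _) _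
  rw [Nat.choose_mul_factorial_mul_factorial hba] at h2
  exact absurd ((Nat.Prime.dvd_factorial hp).mp h2) (by omega)

lemma dom_iff (hp : p.Prime) (m j : ℕ) :
    ¬ p ∣ m.choose j ↔ (¬ p ∣ (m / p).choose (j / p)) ∧ j % p ≤ m % p := by
  have : Fact p.Prime := ⟨hp⟩
  have hl := Choose.choose_modEq_choose_mod_mul_choose_div_nat (n := m) (k := j) (p := p)
  have hdvd : p ∣ m.choose j ↔ p ∣ (m % p).choose (j % p) * ((m / p).choose (j / p)) :=
    ⟨fun h => (Nat.modEq_zero_iff_dvd.mp ((hl.symm.trans (Nat.modEq_zero_iff_dvd.mpr h)))),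
     fun h => (Nat.modEq_zero_iff_dvd.mp ((hl.trans (Nat.modEq_zero_iff_dvd.mpr h))))⟩
  rw [hdvd, hp.dvd_mul]
  constructor
  · intro h
    push_neg at h
    refine ⟨h.2, ?_⟩
    by_contra hlt
    exact h.1 (by rw [Nat.choose_eq_zero_of_lt (by omega)]; exact dvd_zero p)
  · rintro ⟨h1, h2⟩
    push_neg
    exact ⟨not_dvd_choose_small hp (Nat.mod_lt _ hp.pos) h2, h1⟩

lemma dom_self (hp : p.Prime) (j : ℕ) : ¬ p ∣ j.choose j := by
  rw [Nat.choose_self]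
  intro h
  exact hp.one_lt.ne' (Nat.dvd_one.mp h)

lemma dom_le {m j : ℕ} (hp : p.Prime) (h : ¬ p ∣ m.choose j) : j ≤ m := by
  by_contra hlt
  exact h (by rw [Nat.choose_eq_zero_of_lt (by omega)]; exact dvd_zero p)

/-- D1: there is always a "dominating" m in [c, c+j]. -/
lemma exists_dom (hp : p.Prime) (c j : ℕ) :
    ∃ m, c ≤ m ∧ m ≤ c + j ∧ ¬ p ∣ m.choose j := by
  have hp2 := hp.two_le
  have H : ∀ N c j : ℕ, c + j ≤ N → ∃ m, c ≤ m ∧ m ≤ c + j ∧ ¬ p ∣ m.choose j := by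
    intro N
    induction N with
    | zero =>
      intro c j h
      refine ⟨0, by omega, by omega, ?_⟩
      have : c = 0 ∧ j = 0 := by omega
      rw [this.2, Nat.choose_self]
      simpa using hp.one_lt.ne'
    | succ N ih =>
      intro c j h
      rcases Nat.eq_zero_or_pos (c + j) with h0 | h0
      · refine ⟨0, by omega, by omega, ?_⟩
        have : j = 0 := by omega
        rw [this, Nat.choose_self]
        simpa using hp.one_lt.ne'
      · obtain ⟨m', hm1, hm2, hm3⟩ := ih (c / p) (j / p) (by
          have := Nat.div_le_self c p
          have := Nat.div_le_self j p
          have hc := Nat.div_add_mod c p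
          have hj := Nat.div_add_mod j p
          have h1 : c / p + j / p < c + j := by
            rcases Nat.eq_zero_or_pos c with hc0 | hc0
            · have : 0 < j := by omega
              have := Nat.div_lt_self this hp.one_lt
              omega
            · have := Nat.div_lt_self hc0 hp.one_lt
              omega
          omega)
        refine ⟨p * m' + max (c % p) (j % p), ?_, ?_, ?_⟩
        · have hc := Nat.div_add_mod c p
          have : p * (c / p) ≤ p * m' := Nat.mul_le_mul_left p hm1
          omega
        · have hc := Nat.div_add_mod c p
          have hj := Nat.div_add_mod j p
          have : p * m' ≤ p * (c / p + j / p) := Nat.mul_le_mul_left p hm2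
          have hdist : p * (c / p + j / p) = p * (c / p) + p * (j / p) := Nat.mul_add p _ _
          have hmx : max (c % p) (j % p) ≤ c % p + j % p :=
            max_le (Nat.le_add_right _ _) (Nat.le_add_left _ _)
          omega
        · have hmax : max (c % p) (j % p) < p := by
            have h1 : c % p < p := Nat.mod_lt _ (by omega)
            have h2 : j % p < p := Nat.mod_lt _ (by omega)
            exact max_lt h1 h2
          rw [dom_iff hp]
          constructor
          · rwa [Nat.mul_add_div (by omega), Nat.div_eq_of_lt hmax, Nat.add_zero]
          · rw [Nat.mul_add_mod, Nat.mod_eq_of_lt hmax]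
            exact le_max_right _ _
  exact H (c + j) c j le_rfl

/-- If `p^(i+1) ∣ j+1` then the last base-`p` digit of `j` is `p-1`,
`j+1 = p*(j/p+1)`, and `p^i ∣ j/p + 1`. -/
lemma digit_full (hp : p.Prime) {i j : ℕ} (h : p ^ (i + 1) ∣ j + 1) :
    j % p = p - 1 ∧ j + 1 = p * (j / p + 1) ∧ p ^ i ∣ j / p + 1 := by
  have hp2 := hp.two_le
  have hpd : p ∣ j + 1 := dvd_trans (dvd_pow_self p (Nat.succ_ne_zero i)) h
  have hmod : j % p = p - 1 := by
    have h3 : j % p < p := Nat.mod_lt _ (by omega)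
    by_contra hne
    have h4 : (j + 1) % p = 0 := (Nat.mod_eq_zero_of_dvd hpd)
    have h5 : (j + 1) % p = j % p + 1 := by
      conv_lhs => rw [Nat.add_mod, Nat.mod_eq_of_lt hp.one_lt]
      exact Nat.mod_eq_of_lt (by omega)
    omega
  have hj1 : j + 1 = p * (j / p + 1) := by
    have h6 := Nat.div_add_mod j p
    have h7 : p * (j / p + 1) = p * (j / p) + p := Nat.mul_succ _ _
    omega
  refine ⟨hmod, hj1, ?_⟩
  have h8 : p * p ^ i ∣ p * (j / p + 1) := by
    rw [← pow_succ', ← hj1]; exact h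
  exact (mul_dvd_mul_iff_left (show (p:ℕ) ≠ 0 by omega)).mp h8

/-- D2: incrementing digit `i` of `j` (when it is not full) shrinks the set of dominators. -/
lemma dom_incr (hp : p.Prime) : ∀ i j m : ℕ, p ^ i ∣ j + 1 → ¬ p ^ (i + 1) ∣ j + 1 →
    ¬ p ∣ m.choose (j + p ^ i) → ¬ p ∣ m.choose j := by
  have hp2 := hp.two_le
  intro i
  induction i with
  | zero =>
    intro j m _ h1 hd
    rw [pow_one] at h1
    rw [pow_zero] at hd
    have hmod : j % p ≠ p - 1 := by
      intro hmod
      apply h1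
      have h4 : (j + 1) % p = 0 := by
        conv_lhs => rw [Nat.add_mod, Nat.mod_eq_of_lt hp.one_lt]
        rw [hmod]
        have : p - 1 + 1 = p := by omega
        rw [this, Nat.mod_self]
      exact Nat.dvd_of_mod_eq_zero h4
    have hjlt : j % p < p := Nat.mod_lt _ (by omega)
    have e1 : (j + 1) % p = j % p + 1 := by
      conv_lhs => rw [Nat.add_mod, Nat.mod_eq_of_lt hp.one_lt]
      exact Nat.mod_eq_of_lt (by omega)
    have e2 : (j + 1) / p = j / p := by
      rw [Nat.succ_div, if_neg h1, Nat.add_zero]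
    rw [dom_iff hp] at hd ⊢
    rw [e1, e2] at hd
    exact ⟨hd.1, by omega⟩
  | succ i ih =>
    intro j m h0 h1 hd
    obtain ⟨hmod, hj1, hdvd⟩ := digit_full hp h0
    have h1' : ¬ p ^ (i + 1) ∣ j / p + 1 := by
      intro hcon
      apply h1
      rw [hj1]
      calc p ^ (i + 1 + 1) = p * p ^ (i + 1) := pow_succ' p (i + 1)
        _ ∣ p * (j / p + 1) := mul_dvd_mul_left p hcon
    have emod : (j + p ^ (i + 1)) % p = p - 1 := by
      rw [pow_succ, Nat.add_mul_mod_self_right, hmod]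
    have ediv : (j + p ^ (i + 1)) / p = j / p + p ^ i := by
      rw [pow_succ, Nat.add_mul_div_right _ _ (show 0 < p by omega)]
    rw [dom_iff hp] at hd ⊢
    rw [emod, ediv] at hd
    refine ⟨ih (j / p) (m / p) hdvd h1' hd.1, ?_⟩
    rw [hmod]
    exact hd.2

/-- D3: a dominator of `j` shares the trailing `p-1` digits: `p^i ∣ j+1 → p^i ∣ m+1`. -/
lemma dvd_succ_of_dom (hp : p.Prime) : ∀ i j m : ℕ, p ^ i ∣ j + 1 →
    ¬ p ∣ m.choose j → p ^ i ∣ m + 1 := by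
  have hp2 := hp.two_le
  intro i
  induction i with
  | zero => intro j m _ _; simpa using one_dvd _
  | succ i ih =>
    intro j m h0 hd
    obtain ⟨hmod, hj1, hdvd⟩ := digit_full hp h0
    rw [dom_iff hp] at hd
    have hmlt : m % p < p := Nat.mod_lt _ (by omega)
    have hmmod : m % p = p - 1 := by omega
    have hih := ih (j / p) (m / p) hdvd hd.1
    have hm1 : m + 1 = p * (m / p + 1) := by
      have h6 := Nat.div_add_mod m p
      have h7 : p * (m / p + 1) = p * (m / p) + p := Nat.mul_succ _ _
      omega
    rw [hm1]
    calc p ^ (i + 1) = p * p ^ i := pow_succ' p i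
      _ ∣ p * (m / p + 1) := mul_dvd_mul_left p hih

lemma mod_pow_succ (hp : p.Prime) (x i : ℕ) :
    x % p ^ (i + 1) = p * (x / p % p ^ i) + x % p := by
  have hp2 := hp.two_le
  have h1 : x % p ^ (i + 1) % p = x % p :=
    Nat.mod_mod_of_dvd x (dvd_pow_self p (Nat.succ_ne_zero i))
  have h2 : x % p ^ (i + 1) / p = x / p % p ^ i := by
    rw [pow_succ']
    exact Nat.mod_mul_right_div_self x p (p ^ i)
  have h3 := Nat.div_add_mod (x % p ^ (i + 1)) p
  have h4 : p * (x % p ^ (i + 1) / p) = p * (x / p % p ^ i) := by rw [h2]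
  omega

/-- D4: domination is inherited by truncation of digits: `j % p^i ≤ m % p^i`. -/
lemma mod_pow_le (hp : p.Prime) : ∀ i m j : ℕ, ¬ p ∣ m.choose j →
    j % p ^ i ≤ m % p ^ i := by
  intro i
  induction i with
  | zero => intro m j _; simp [Nat.mod_one]
  | succ i ih =>
    intro m j hd
    rw [dom_iff hp] at hd
    have hih := ih (m / p) (j / p) hd.1
    rw [mod_pow_succ hp, mod_pow_succ hp]
    have := Nat.mul_le_mul_left p hih
    omega

/-- Main number-theoretic uniqueness: if the smallest nonempty nucleus-index set is the
singleton `{j}` then `n = 2 p^i - 2`. -/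
theorem nt_unique (hp : p.Prime) {n c j : ℕ} (hn : 2 ≤ n) (hj : j ≤ n) (hcn : c ≤ n)
    (G1 : ∀ m, c ≤ m → m ≤ n → p ∣ m.choose j)
    (G2 : ∀ j', j' ≤ n → j' ≠ j → ∃ m, c ≤ m ∧ m ≤ n ∧ ¬ p ∣ m.choose j')
    (G3 : ∃ m, c - 1 ≤ m ∧ m ≤ n ∧ ¬ p ∣ m.choose j) :
    ∃ i : ℕ, n = 2 * p ^ i - 2 := by
  have hp2 := hp.two_le
  set i := (j + 1).factorization p with hi
  have hpi : p ^ i ∣ j + 1 := Nat.ordProj_dvd (j + 1) p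
  have hpipos : 1 ≤ p ^ i := Nat.pow_pos (by omega)
  have hpi1 : ¬ p ^ (i + 1) ∣ j + 1 := Nat.pow_succ_factorization_not_dvd (Nat.succ_ne_zero j) hp
  have hc1 : 1 ≤ c := by
    by_contra h
    exact dom_self hp j (G1 j (by omega) hj)
  obtain ⟨m₀, hm₀1, hm₀2, hm₀3⟩ := G3
  have hm₀ : m₀ = c - 1 := by
    by_contra h
    exact hm₀3 (G1 m₀ (by omega) hm₀2)
  have hjc : j ≤ c - 1 := dom_le hp (hm₀ ▸ hm₀3)
  have hstep2 : n < j + p ^ i := by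
    by_contra h
    push_neg at h
    obtain ⟨m, hm1, hm2, hm3⟩ := G2 (j + p ^ i) h (by omega)
    exact dom_incr hp i j m hpi hpi1 hm3 (G1 m hm1 hm2)
  have hstep3 : c - 1 = j := by
    by_contra h
    have hg : j < c - 1 := by omega
    have hdvd : p ^ i ∣ (c - 1) + 1 := dvd_succ_of_dom hp i j (c - 1) hpi (hm₀ ▸ hm₀3)
    obtain ⟨a, ha⟩ := hpi
    obtain ⟨b, hb⟩ := hdvd
    have ha' : p ^ i * a < p ^ i * b := by omega
    have hab : a < b := lt_of_mul_lt_mul_left ha' (Nat.zero_le _)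
    have h2 : p ^ i * (a + 1) ≤ p ^ i * b := Nat.mul_le_mul_left _ hab
    have h3 : p ^ i * (a + 1) = p ^ i * a + p ^ i := Nat.mul_succ _ _
    omega
  have hb : j + 1 = p ^ i := by
    obtain ⟨b, hbb⟩ := hpi
    by_contra hne
    have hb2 : 2 ≤ b := by
      rcases b with _ | _ | b
      · omega
      · rw [Nat.mul_one] at hbb; omega
      · omega
    have hj'le : p ^ i - 1 ≤ n := by
      have : p ^ i * 1 ≤ p ^ i * b := Nat.mul_le_mul_left _ (by omega)
      omega
    have hj'ne : p ^ i - 1 ≠ j := by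
      intro hcon
      have : p ^ i = j + 1 := by omega
      omega
    obtain ⟨m, hm1, hm2, hm3⟩ := G2 (p ^ i - 1) hj'le hj'ne
    have hdvd : p ^ i ∣ m + 1 :=
      dvd_succ_of_dom hp i _ m (by rw [Nat.sub_add_cancel hpipos]) hm3
    obtain ⟨t, ht⟩ := hdvd
    have hbt : b < t := by
      have h4 : p ^ i * b < p ^ i * t := by omega
      exact lt_of_mul_lt_mul_left h4 (Nat.zero_le _)
    have h5 : p ^ i * (b + 1) ≤ p ^ i * t := Nat.mul_le_mul_left _ hbt
    have h6 : p ^ i * (b + 1) = p ^ i * b + p ^ i := Nat.mul_succ _ _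
    omega
  refine ⟨i, ?_⟩
  have hdle : n - j ≤ p ^ i - 1 := by omega
  rcases eq_or_lt_of_le hdle with heq | hlt
  · omega
  · exfalso
    set d := n - j with hd
    have hdn : d ≤ n := by omega
    have hdj : d ≠ j := by omega
    obtain ⟨m, hm1, hm2, hm3⟩ := G2 d hdn hdj
    have h4 := mod_pow_le hp i m d hm3
    have hdm : d % p ^ i = d := Nat.mod_eq_of_lt (by omega)
    have hmm : m % p ^ i = m - p ^ i := by
      rw [Nat.mod_eq_sub_mod (by omega)]
      exact Nat.mod_eq_of_lt (by omega)
    omega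

/-- In the special case `n = 2p^i - 2`, every `m ∈ [p^i, n]` has `p ∣ C(m, p^i - 1)`. -/
theorem nt_special_mem (hp : p.Prime) {n i : ℕ} (h : n = 2 * p ^ i - 2) (hn : 2 ≤ n) :
    ∀ m, p ^ i ≤ m → m ≤ n → p ∣ m.choose (p ^ i - 1) := by
  have hp2 := hp.two_le
  intro m h1 h2
  by_contra hdom
  have hq1 : 1 ≤ p ^ i := Nat.pow_pos (by omega)
  have hdvd : p ^ i ∣ m + 1 :=
    dvd_succ_of_dom hp i _ m (by rw [Nat.sub_add_cancel hq1]) hdom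
  obtain ⟨t, ht⟩ := hdvd
  have h2' : 2 ≤ p ^ i := by omega
  rcases le_or_gt t 1 with h5 | h5
  · have : p ^ i * t ≤ p ^ i * 1 := Nat.mul_le_mul_left _ h5
    omega
  · have : p ^ i * 2 ≤ p ^ i * t := Nat.mul_le_mul_left _ h5
    omega

/-- In the special case, `j = p^i - 1` is the only possible index for `c ≤ p^i`. -/
theorem nt_special_unique (hp : p.Prime) {n i : ℕ} (h : n = 2 * p ^ i - 2) (hn : 2 ≤ n)
    {c j : ℕ} (hc : c ≤ p ^ i) (hj : j ≤ n)
    (hP : ∀ m, c ≤ m → m ≤ n → p ∣ m.choose j) :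
    j = p ^ i - 1 := by
  have hp2 := hp.two_le
  have hq2 : 2 ≤ p ^ i := by omega
  have hjlt : j < p ^ i := by
    by_contra hge
    push_neg at hge
    exact dom_self hp j (hP j (by omega) hj)
  obtain ⟨m, hm1, hm2, hm3⟩ := exists_dom hp (p ^ i) j
  by_contra hne
  exact hm3 (hP m (by omega) (by omega))

/-- Key Vandermonde-type binomial identity. -/
lemma key_sum {R : Type*} [CommRing R] (x y : R) {m j N : ℕ} (hm : m ≤ N) :
    ∑ s ∈ Finset.range (N + 1),
        (m.choose s : R) * (s.choose j : R) * x ^ (m - s) * y ^ (s - j)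
      = (m.choose j : R) * (x + y) ^ (m - j) := by
  rcases le_or_gt j m with hj | hj
  · have h1 : ∑ s ∈ Finset.range (N + 1),
          (m.choose s : R) * (s.choose j : R) * x ^ (m - s) * y ^ (s - j)
        = ∑ s ∈ Finset.Ico j (m + 1),
          (m.choose s : R) * (s.choose j : R) * x ^ (m - s) * y ^ (s - j) := by
      apply (Finset.sum_subset ?_ ?_).symm
      · intro s hs
        simp only [Finset.mem_Ico, Finset.mem_range] at *
        omega
      · intro s hs1 hs2
        simp only [Finset.mem_Ico, Finset.mem_range] at hs1 hs2
        rcases le_or_gt s m with h | h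
        · rw [Nat.choose_eq_zero_of_lt (show s < j by omega)]
          simp
        · rw [Nat.choose_eq_zero_of_lt h]
          simp
    rw [h1, Finset.sum_Ico_eq_sum_range]
    rw [show m + 1 - j = m - j + 1 by omega]
    rw [add_comm x y, Commute.add_pow (Commute.all y x), Finset.mul_sum]
    apply Finset.sum_congr rfl
    intro t ht
    simp only [Finset.mem_range] at ht
    have h5 : m.choose (j + t) * (j + t).choose j = m.choose j * (m - j).choose t := by
      have h6 := Nat.choose_mul (n := m) (show j ≤ j + t by omega)
      rwa [show j + t - j = t by omega] at h6
    have h7 : (m.choose (j + t) : R) * ((j + t).choose j : R)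
        = (m.choose j : R) * ((m - j).choose t : R) := by
      exact_mod_cast congrArg (Nat.cast : ℕ → R) h5
    rw [show j + t - j = t by omega, show m - (j + t) = m - j - t by omega]
    linear_combination (x ^ (m - j - t) * y ^ t) * h7
  · rw [Nat.choose_eq_zero_of_lt hj, Nat.cast_zero, zero_mul]
    apply Finset.sum_eq_zero
    intro s hs
    rcases le_or_gt s m with h | h
    · rw [Nat.choose_eq_zero_of_lt (show s < j by omega), Nat.cast_zero]
      ring
    · rw [Nat.choose_eq_zero_of_lt h, Nat.cast_zero]
      ring

end SNP

/-- The `k`-osculating subspace (here parametrized by `c = k+1`, the number of spanning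
columns) of the normal rational curve `x ↦ (1, x, …, xⁿ)` in `F^{n+1}` at the point with
parameter `u`: the span of the first `c` columns of the matrix with entries
`C(r,s) u^{r−s}` (`0 ≤ s ≤ r ≤ n`), i.e. of the point and its first `c-1`
Hasse-derivative points. -/
def oscSub (F : Type) [Field F] (n : ℕ) (u : F) (c : ℕ) : Submodule F (Fin (n + 1) → F) :=
  Submodule.span F
    (Set.range fun s : Fin c => fun r : Fin (n + 1) => (r.1.choose s.1 : F) * u ^ (r.1 - s.1))

/-- The `k`-osculating subspace (with `c = k+1`) at the point `u = ∞` of the curve: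
the span of the last `c` standard basis vectors `e_n, …, e_{n-c+1}`. -/
def oscInfty (F : Type) [Field F] (n c : ℕ) : Submodule F (Fin (n + 1) → F) :=
  Submodule.span F {v | ∃ i : Fin (n + 1), n + 1 ≤ i.1 + c ∧ v = Pi.single i 1}

/-- The `k`-nucleus (with `c = k+1`) of the normal rational curve: the intersection of
all its `k`-osculating subspaces. -/
def nucleus (F : Type) [Field F] (n c : ℕ) : Submodule F (Fin (n + 1) → F) :=
  (⨅ u : F, oscSub F n u c) ⊓ oscInfty F n c


namespace SNP

variable {F : Type} [Field F] {p n : ℕ}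

/-- The set of standard basis vectors spanning the `c`-nucleus. -/
def genSet (F : Type) [Field F] (p n c : ℕ) : Set (Fin (n + 1) → F) :=
  {v | ∃ j : Fin (n + 1), (∀ m, c ≤ m → m ≤ n → p ∣ m.choose j.1) ∧ v = Pi.single j 1}

lemma single_mem_oscSub (hp : p.Prime) [CharP F p] {c : ℕ} (hc : c ≤ n) (u : F)
    (j : Fin (n + 1)) (hj : ∀ m, c ≤ m → m ≤ n → p ∣ m.choose j.1) :
    Pi.single j (1 : F) ∈ oscSub F n u c := by
  have hrep : Pi.single j (1 : F) = ∑ s : Fin c, ((s.1.choose j.1 : F) * (-u) ^ (s.1 - j.1)) •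
      (fun r : Fin (n + 1) => (r.1.choose s.1 : F) * u ^ (r.1 - s.1)) := by
    funext r
    rw [Finset.sum_apply]
    have hterm : ∀ s : Fin c, (((s.1.choose j.1 : F) * (-u) ^ (s.1 - j.1)) •
        (fun r : Fin (n + 1) => (r.1.choose s.1 : F) * u ^ (r.1 - s.1))) r
        = (r.1.choose s.1 : F) * (s.1.choose j.1 : F) * u ^ (r.1 - s.1) * (-u) ^ (s.1 - j.1) := by
      intro s
      simp only [Pi.smul_apply, smul_eq_mul]
      ring
    rw [Finset.sum_congr rfl (fun s _ => hterm s)]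
    have hfin : ∑ s : Fin c, (r.1.choose s.1 : F) * (s.1.choose j.1 : F) * u ^ (r.1 - s.1) *
          (-u) ^ (s.1 - j.1)
        = ∑ s ∈ Finset.range c, (r.1.choose s : F) * (s.choose j.1 : F) * u ^ (r.1 - s) *
          (-u) ^ (s - j.1) :=
      Fin.sum_univ_eq_sum_range (fun s => (r.1.choose s : F) * (s.choose j.1 : F) * u ^ (r.1 - s) * (-u) ^ (s - j.1)) c
    rw [hfin]
    have hext : ∑ s ∈ Finset.range c, (r.1.choose s : F) * (s.choose j.1 : F) * u ^ (r.1 - s) *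
          (-u) ^ (s - j.1)
        = ∑ s ∈ Finset.range (n + 1), (r.1.choose s : F) * (s.choose j.1 : F) * u ^ (r.1 - s) *
          (-u) ^ (s - j.1) := by
      apply Finset.sum_subset
      · exact Finset.range_subset_range.mpr (by omega)
      · intro s hs1 hs2
        simp only [Finset.mem_range] at hs1 hs2
        have hz : ((s.choose j.1 : ℕ) : F) = 0 :=
          (CharP.cast_eq_zero_iff F p _).mpr (hj s (by omega) (by omega))
        rw [hz]
        ring
    rw [hext, key_sum u (-u) (by omega : r.1 ≤ n)]
    rw [add_neg_cancel]
    rcases lt_trichotomy r.1 j.1 with h | h | h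
    · rw [Nat.choose_eq_zero_of_lt h, Nat.cast_zero, zero_mul]
      rw [Pi.single_apply, if_neg (by intro hh; rw [hh] at h; omega)]
    · rw [show r.1 - j.1 = 0 by omega, pow_zero, show r = j from Fin.ext h]
      simp
    · rw [zero_pow (by omega : r.1 - j.1 ≠ 0), mul_zero]
      rw [Pi.single_apply, if_neg (by intro hh; rw [hh] at h; omega)]
  rw [hrep]
  exact Submodule.sum_mem _ fun s _ =>
    Submodule.smul_mem _ _ (Submodule.subset_span ⟨s, rfl⟩)

lemma single_mem_oscInfty (hp : p.Prime) {c : ℕ} (j : Fin (n + 1))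
    (hj : ∀ m, c ≤ m → m ≤ n → p ∣ m.choose j.1) :
    Pi.single j (1 : F) ∈ oscInfty F n c := by
  obtain ⟨m, hm1, hm2, hm3⟩ := exists_dom hp c j.1
  have hge : n + 1 ≤ j.1 + c := by
    by_contra h
    exact hm3 (hj m hm1 (by omega))
  exact Submodule.subset_span ⟨j, hge, rfl⟩

lemma nucleus_le_span_genSet (hp : p.Prime) [CharP F p]
    (hF : (n : Cardinal) ≤ Cardinal.mk F) {c : ℕ} (hc1 : 1 ≤ c) (hcn : c ≤ n) :
    nucleus F n c ≤ Submodule.span F (genSet F p n c) := by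
  intro v hv
  obtain ⟨hv1, hv2⟩ := Submodule.mem_inf.mp hv
  rw [Submodule.mem_iInf] at hv1
  -- (I) low coordinates vanish
  have hlow : ∀ r : Fin (n + 1), r.1 + c ≤ n → v r = 0 := by
    intro r hr
    have hle : oscInfty F n c ≤
        LinearMap.ker (LinearMap.proj (R := F) (φ := fun _ : Fin (n + 1) => F) r) := by
      rw [oscInfty, Submodule.span_le]
      rintro w ⟨i, hi, rfl⟩
      have hne : r ≠ i := fun h => by rw [h] at hr; omega
      simp only [SetLike.mem_coe, LinearMap.mem_ker, LinearMap.proj_apply]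
      exact Pi.single_eq_of_ne hne 1
    exact LinearMap.mem_ker.mp (hle hv2)
  -- (II) the coefficients `C(m,r) v_r` vanish for `c ≤ m ≤ n`
  have hcoeff : ∀ m, c ≤ m → m ≤ n → ∀ r : Fin (n + 1), (m.choose r.1 : F) * v r = 0 := by
    intro m hm1 hm2
    have hL : ∀ z : F, ∑ r : Fin (n + 1), (m.choose r.1 : F) * z ^ (m - r.1) * v r = 0 := by
      intro z
      set L : (Fin (n + 1) → F) →ₗ[F] F :=
        ∑ r : Fin (n + 1), ((m.choose r.1 : F) * z ^ (m - r.1)) •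
          LinearMap.proj (R := F) (φ := fun _ : Fin (n + 1) => F) r with hLdef
      have hLapply : ∀ w : Fin (n + 1) → F,
          L w = ∑ r : Fin (n + 1), (m.choose r.1 : F) * z ^ (m - r.1) * w r := by
        intro w
        rw [hLdef, LinearMap.sum_apply]
        exact Finset.sum_congr rfl fun r _ => by
          simp [LinearMap.smul_apply, LinearMap.proj_apply, smul_eq_mul]
      have hker : oscSub F n (-z) c ≤ LinearMap.ker L := by
        rw [oscSub, Submodule.span_le]
        rintro w ⟨s, rfl⟩
        simp only [SetLike.mem_coe, LinearMap.mem_ker]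
        rw [hLapply]
        calc ∑ r : Fin (n + 1), (m.choose r.1 : F) * z ^ (m - r.1) *
              ((r.1.choose s.1 : F) * (-z) ^ (r.1 - s.1))
            = ∑ r ∈ Finset.range (n + 1),
              (m.choose r : F) * (r.choose s.1 : F) * z ^ (m - r) * (-z) ^ (r - s.1) := by
              rw [← Fin.sum_univ_eq_sum_range (fun r => (m.choose r : F) * (r.choose s.1 : F) *
                z ^ (m - r) * (-z) ^ (r - s.1)) (n + 1)]
              exact Finset.sum_congr rfl fun r _ => by ring
          _ = (m.choose s.1 : F) * (z + -z) ^ (m - s.1) := key_sum z (-z) (by omega)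
          _ = 0 := by
              rw [add_neg_cancel, zero_pow (show m - s.1 ≠ 0 by have := s.2; omega), mul_zero]
      have hv0 : L v = 0 := LinearMap.mem_ker.mp (hker (hv1 (-z)))
      rwa [hLapply] at hv0
    set q : Polynomial F :=
      ∑ r : Fin (n + 1), Polynomial.C ((m.choose r.1 : F) * v r) * Polynomial.X ^ (m - r.1)
      with hq
    have heval : ∀ z : F, q.eval z = 0 := by
      intro z
      rw [hq, Polynomial.eval_finset_sum, ← hL z]
      exact Finset.sum_congr rfl fun r _ => by
        rw [Polynomial.eval_mul, Polynomial.eval_C, Polynomial.eval_pow, Polynomial.eval_X]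
        ring
    have hdeg : q.natDegree ≤ c - 1 := by
      rw [hq]
      apply Polynomial.natDegree_sum_le_of_forall_le
      intro r _
      by_cases hvr : v r = 0
      · rw [hvr, mul_zero, map_zero, zero_mul]
        simp
      · have hge : n + 1 ≤ r.1 + c := by
          by_contra h
          exact hvr (hlow r (by omega))
        exact le_trans (Polynomial.natDegree_C_mul_X_pow_le _ _) (by omega)
    have hq0 : q = 0 := by
      obtain ⟨emb⟩ : Nonempty (Fin n ↪ F) := by
        rw [← Cardinal.le_def]
        rwa [Cardinal.mk_fin]
      apply Polynomial.eq_zero_of_natDegree_lt_card_of_eval_eq_zero q emb.injective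
        (fun i => heval (emb i))
      rw [Fintype.card_fin]
      omega
    intro r
    rcases le_or_gt r.1 m with hrm | hrm
    · have hcoe := congrArg (fun pp => Polynomial.coeff pp (m - r.1)) hq0
      simp only [Polynomial.coeff_zero] at hcoe
      rw [hq, Polynomial.finset_sum_coeff] at hcoe
      rw [Finset.sum_eq_single r ?hne ?hnm] at hcoe
      case hne =>
        intro b _ hb
        rw [Polynomial.coeff_C_mul, Polynomial.coeff_X_pow]
        rcases le_or_gt b.1 m with hbm | hbm
        · rw [if_neg (by intro hh; exact hb (Fin.ext (by omega)))]
          ring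
        · rw [Nat.choose_eq_zero_of_lt hbm, Nat.cast_zero, zero_mul, zero_mul]
      case hnm =>
        intro hr
        exact absurd (Finset.mem_univ r) hr
      rwa [Polynomial.coeff_C_mul, Polynomial.coeff_X_pow, if_pos rfl, mul_one] at hcoe
    · rw [Nat.choose_eq_zero_of_lt hrm, Nat.cast_zero, zero_mul]
  -- (III) conclude
  rw [pi_eq_sum_univ v]
  apply Submodule.sum_mem
  intro i _
  by_cases hvi : v i = 0
  · rw [hvi, zero_smul]
    exact Submodule.zero_mem _
  · apply Submodule.smul_mem
    apply Submodule.subset_span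
    refine ⟨i, fun m h1 h2 => ?_, ?_⟩
    · rcases mul_eq_zero.mp (hcoeff m h1 h2 i) with h | h
      · exact (CharP.cast_eq_zero_iff F p _).mp h
      · exact absurd h hvi
    · funext j'
      simp [Pi.single_apply, eq_comm]

lemma span_genSet_le_nucleus (hp : p.Prime) [CharP F p] {c : ℕ} (hc : c ≤ n) :
    Submodule.span F (genSet F p n c) ≤ nucleus F n c := by
  rw [Submodule.span_le]
  rintro v ⟨j, hj, rfl⟩
  refine ⟨Submodule.mem_iInf _ |>.mpr fun u => single_mem_oscSub hp hc u j hj, ?_⟩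
  exact single_mem_oscInfty hp j hj

lemma genSet_mono {c c' : ℕ} (h : c ≤ c') : genSet F p n c ⊆ genSet F p n c' := by
  rintro v ⟨j, hj, rfl⟩
  exact ⟨j, fun m h1 h2 => hj m (by omega) h2, rfl⟩

lemma nucleus_zero : nucleus F n 0 = ⊥ := by
  have h : oscInfty F n 0 = ⊥ := by
    rw [oscInfty]
    convert Submodule.span_empty (R := F)
    apply Set.eq_empty_iff_forall_notMem.mpr
    rintro v ⟨i, hi, rfl⟩
    have := i.2
    omega
  rw [nucleus, h, inf_bot_eq]

lemma single_ne_zero' (j : Fin (n + 1)) : (Pi.single j (1 : F) : Fin (n + 1) → F) ≠ 0 := by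
  intro h0
  have := congrFun h0 j
  rw [Pi.single_eq_same] at this
  exact one_ne_zero this

lemma nucleus_eq_span (hp : p.Prime) [CharP F p] (hF : (n : Cardinal) ≤ Cardinal.mk F)
    {c : ℕ} (hc1 : 1 ≤ c) (hcn : c ≤ n) :
    nucleus F n c = Submodule.span F (genSet F p n c) :=
  le_antisymm (nucleus_le_span_genSet hp hF hc1 hcn) (span_genSet_le_nucleus hp hcn)

lemma sInf_eq_special (hp : p.Prime) [CharP F p] (hn : 2 ≤ n)
    (hF : (n : Cardinal) ≤ Cardinal.mk F) {i : ℕ} (h2pi : n = 2 * p ^ i - 2) :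
    sInf {N : Submodule F (Fin (n + 1) → F) | (∃ c ≤ n, N = nucleus F n c) ∧ N ≠ ⊥}
      = Submodule.span F {Pi.single (⟨p ^ i - 1, Nat.lt_succ_of_le (by omega)⟩ : Fin (n + 1)) (1 : F)} := by
  have hq2 : 2 ≤ p ^ i := by omega
  have hqn : p ^ i ≤ n := by omega
  set e : Fin (n + 1) → F := Pi.single (⟨p ^ i - 1, Nat.lt_succ_of_le (by omega)⟩ : Fin (n + 1)) (1 : F) with he
  have hgen : genSet F p n (p ^ i) = {e} := by
    ext v
    constructor
    · rintro ⟨j, hj, rfl⟩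
      have hju : j.1 = p ^ i - 1 :=
        nt_special_unique hp h2pi hn le_rfl (Nat.lt_succ_iff.mp j.2) hj
      have hjj : j = (⟨p ^ i - 1, Nat.lt_succ_of_le (by omega)⟩ : Fin (n + 1)) := Fin.ext hju
      rw [hjj]
      rfl
    · rintro hv
      rw [Set.mem_singleton_iff] at hv
      subst hv
      exact ⟨_, fun m h1 h2 => nt_special_mem hp h2pi hn m h1 h2, rfl⟩
  have hnuc : nucleus F n (p ^ i) = Submodule.span F {e} := by
    rw [nucleus_eq_span hp hF (by omega) hqn, hgen]
  apply le_antisymm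
  · apply sInf_le
    refine ⟨⟨p ^ i, hqn, hnuc.symm⟩, ?_⟩
    intro hbot
    have hmem : e ∈ (⊥ : Submodule F (Fin (n + 1) → F)) :=
      hbot ▸ Submodule.mem_span_singleton_self e
    exact single_ne_zero' _ ((Submodule.mem_bot F).mp hmem)
  · apply le_sInf
    rintro N ⟨⟨c, hcn, rfl⟩, hbot⟩
    have hc1 : 1 ≤ c := by
      by_contra h
      have hc0 : c = 0 := by omega
      rw [hc0, nucleus_zero] at hbot
      exact hbot rfl
    have hNeq := nucleus_eq_span hp hF hc1 hcn
    rw [Submodule.span_le, Set.singleton_subset_iff, SetLike.mem_coe]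
    rcases le_total c (p ^ i) with hle | hle
    · have hne : ∃ j : Fin (n + 1), ∀ m, c ≤ m → m ≤ n → p ∣ m.choose j.1 := by
        by_contra hempty
        push_neg at hempty
        apply hbot
        rw [hNeq]
        convert Submodule.span_empty (R := F)
        apply Set.eq_empty_iff_forall_notMem.mpr
        rintro v ⟨j, hj, rfl⟩
        obtain ⟨m, hm1, hm2, hm3⟩ := hempty j
        exact hm3 (hj m hm1 hm2)
      obtain ⟨j, hj⟩ := hne
      have hju : j.1 = p ^ i - 1 :=
        nt_special_unique hp h2pi hn hle (Nat.lt_succ_iff.mp j.2) hj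
      rw [hNeq]
      apply Submodule.subset_span
      refine ⟨j, hj, ?_⟩
      rw [he, show (⟨p ^ i - 1, Nat.lt_succ_of_le (by omega)⟩ : Fin (n + 1)) = j from (Fin.ext hju).symm]
    · rw [hNeq]
      apply Submodule.subset_span
      exact ⟨⟨p ^ i - 1, Nat.lt_succ_of_le (by omega)⟩, fun m h1 h2 => nt_special_mem hp h2pi hn m (by omega) h2, rfl⟩
end SNP

/-- Over a field of characteristic `p > 0` with `#F ≥ n` and `n ≥ 2`, the smallest
non-empty nucleus of the normal rational curve `V_1^n` (the infimum of all non-zero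
`k`-nuclei, `k ∈ {−1,…,n−1}`, i.e. `c = k+1 ∈ {0,…,n}`) is a single projective point
(vector-space dimension `1`) if and only if `n = 2pⁱ − 2` for some `i ∈ ℕ`; and in that
case this point is `F·c_{pⁱ−1}`. -/
theorem smallest_nucleus_point (F : Type) [Field F] (p : ℕ) (hp : p.Prime) [CharP F p]
    (n : ℕ) (hn : 2 ≤ n) (hF : (n : Cardinal) ≤ Cardinal.mk F) :
    (Module.finrank F
        ↥(sInf {N : Submodule F (Fin (n + 1) → F) | (∃ c ≤ n, N = nucleus F n c) ∧ N ≠ ⊥}) = 1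
      ↔ ∃ i : ℕ, n = 2 * p ^ i - 2) ∧
    ∀ i : ℕ, ∀ _h2pi : n = 2 * p ^ i - 2,
      sInf {N : Submodule F (Fin (n + 1) → F) | (∃ c ≤ n, N = nucleus F n c) ∧ N ≠ ⊥}
        = Submodule.span F {Pi.single (⟨p ^ i - 1, by omega⟩ : Fin (n + 1)) 1} := by
  classical
  constructor
  · constructor
    · -- hard direction
      intro h1
      by_contra hno
      push_neg at hno
      rcases Set.eq_empty_or_nonempty
          {N : Submodule F (Fin (n + 1) → F) | (∃ c ≤ n, N = nucleus F n c) ∧ N ≠ ⊥} with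
        hS | ⟨N₀, ⟨⟨c₀, hc₀n, hN₀⟩, hb₀⟩⟩
      · rw [hS, sInf_empty] at h1
        rw [finrank_top, Module.finrank_fin_fun] at h1
        omega
      · subst hN₀
        have hex : ∃ c, 1 ≤ c ∧ c ≤ n ∧ nucleus F n c ≠ ⊥ := by
          refine ⟨c₀, ?_, hc₀n, hb₀⟩
          by_contra h
          have hc0 : c₀ = 0 := by omega
          rw [hc0, SNP.nucleus_zero] at hb₀
          exact hb₀ rfl
        set c₁ := Nat.find hex with hc₁def
        obtain ⟨h11, h12, h13⟩ := Nat.find_spec hex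
        have hNeq := SNP.nucleus_eq_span (F := F) hp hF h11 h12
        have hSinf : sInf {N : Submodule F (Fin (n + 1) → F) |
            (∃ c ≤ n, N = nucleus F n c) ∧ N ≠ ⊥} = nucleus F n c₁ := by
          apply le_antisymm
          · exact sInf_le ⟨⟨c₁, h12, rfl⟩, h13⟩
          · apply le_sInf
            rintro N ⟨⟨c, hcn, rfl⟩, hbot⟩
            have hc1 : 1 ≤ c := by
              by_contra h
              have hc0 : c = 0 := by omega
              rw [hc0, SNP.nucleus_zero] at hbot
              exact hbot rfl
            have hle : c₁ ≤ c := Nat.find_min' hex ⟨hc1, hcn, hbot⟩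
            rw [hNeq, SNP.nucleus_eq_span (F := F) hp hF hc1 hcn]
            exact Submodule.span_mono (SNP.genSet_mono hle)
        rw [hSinf] at h1
        -- the generating set is nonempty
        have hnonempty : ∃ j : Fin (n + 1), ∀ m, c₁ ≤ m → m ≤ n → p ∣ m.choose j.1 := by
          by_contra hempty
          push_neg at hempty
          apply h13
          rw [hNeq]
          convert Submodule.span_empty (R := F)
          apply Set.eq_empty_iff_forall_notMem.mpr
          rintro v ⟨j, hj, rfl⟩
          obtain ⟨m, hm1, hm2, hm3⟩ := hempty j
          exact hm3 (hj m hm1 hm2)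
        obtain ⟨j, hj⟩ := hnonempty
        -- uniqueness of j, from finrank = 1
        have huniq : ∀ j' : Fin (n + 1),
            (∀ m, c₁ ≤ m → m ≤ n → p ∣ m.choose j'.1) → j' = j := by
          intro j' hj'
          by_contra hne
          have hmem : ∀ k : Fin (n + 1), (∀ m, c₁ ≤ m → m ≤ n → p ∣ m.choose k.1) →
              Pi.single k (1 : F) ∈ nucleus F n c₁ := fun k hk => by
            rw [hNeq]
            exact Submodule.subset_span ⟨k, hk, rfl⟩
          set f : Bool → Fin (n + 1) := fun b => if b then j else j' with hf
          have hfi : Function.Injective f := by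
            intro a b hab
            cases a <;> cases b <;> simp [hf] at hab ⊢
            · exact hne hab
            · exact hne hab.symm
          have hli : LinearIndependent F
              (fun b : Bool => (Pi.single (f b) (1 : F) : Fin (n + 1) → F)) := by
            have h0 := (Pi.basisFun F (Fin (n + 1))).linearIndependent
            have hcoe : ⇑(Pi.basisFun F (Fin (n + 1))) =
                fun i : Fin (n + 1) => Pi.single i (1 : F) :=
              funext fun i => Pi.basisFun_apply F (Fin (n + 1)) i
            rw [hcoe] at h0
            exact h0.comp f hfi
          have hmemb : ∀ b : Bool, Pi.single (f b) (1 : F) ∈ nucleus F n c₁ := by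
            intro b
            cases b
            · exact hmem j' hj'
            · exact hmem j hj
          set g : Bool → ↥(nucleus F n c₁) := fun b => ⟨Pi.single (f b) 1, hmemb b⟩ with hg
          have hgi : LinearIndependent F g := by
            apply LinearIndependent.of_comp (nucleus F n c₁).subtype
            exact hli
          have hcard := hgi.fintype_card_le_finrank
          rw [h1, Fintype.card_bool] at hcard
          omega
        -- apply the number-theoretic uniqueness
        have hj_n : j.1 ≤ n := Nat.lt_succ_iff.mp j.2
        obtain ⟨i, hi⟩ := SNP.nt_unique hp hn hj_n h12 hj
          (by
            intro j' hj'n hj'ne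
            by_contra hcon
            push_neg at hcon
            have heq := huniq ⟨j', by omega⟩ hcon
            exact hj'ne (congrArg Fin.val heq))
          (by
            rcases Nat.lt_or_ge 1 c₁ with h | h
            · have hmin := Nat.find_min hex (show c₁ - 1 < c₁ by omega)
              have hbot2 : nucleus F n (c₁ - 1) = ⊥ := by
                by_contra hb
                exact hmin ⟨by omega, by omega, hb⟩
              by_contra hcon
              push_neg at hcon
              have hmem2 : Pi.single j (1 : F) ∈ nucleus F n (c₁ - 1) :=
                SNP.span_genSet_le_nucleus hp (by omega)
                  (Submodule.subset_span ⟨j, hcon, rfl⟩)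
              rw [hbot2, Submodule.mem_bot] at hmem2
              exact SNP.single_ne_zero' j hmem2
            · exact ⟨j.1, by omega, hj_n, SNP.dom_self hp j.1⟩)
        exact hno i hi
    · rintro ⟨i, h2pi⟩
      rw [SNP.sInf_eq_special hp hn hF h2pi]
      exact finrank_span_singleton (SNP.single_ne_zero' _)
  · intro i h2pi
    exact SNP.sInf_eq_special hp hn hF h2pi
end

section
/- Let F be a field of characteristic p > 0 with #F ≥ n and n ≥ 2. All nuclei of the normal rational curve V_1^n are empty if and only if n + 1 = n_J · p^J for some J ∈ ℕ and 1 ≤ n_J < p, i.e. n = ⟨n_J, p−1, …, p−1⟩ in base p. -/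
open Finset

lemma small_not_dvd {p : ℕ} (hp : p.Prime) {a b : ℕ} (ha : a < p) (hb : b ≤ a) :
    ¬ p ∣ a.choose b := by
  intro h
  have h2 : p ∣ a.factorial := by
    rw [← Nat.choose_mul_factorial_mul_factorial hb]
    exact Dvd.dvd.mul_right (Dvd.dvd.mul_right h _) _
  have := (Nat.Prime.dvd_factorial hp).mp h2
  omega

lemma claimA {p : ℕ} (hp : p.Prime) :
    ∀ J nJ, 1 ≤ nJ → nJ < p → ∀ j ≤ nJ * p ^ J - 1, ¬ p ∣ (nJ * p ^ J - 1).choose j := by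
  haveI : Fact p.Prime := ⟨hp⟩
  have hp2 := hp.two_le
  intro J
  induction J with
  | zero =>
    intro nJ h1 h2 j hj
    simp only [pow_zero, mul_one] at hj ⊢
    exact small_not_dvd hp (by omega) hj
  | succ J ih =>
    intro nJ h1 h2 j hj hdvd
    set M := nJ * p ^ J with hM
    have hM1 : 1 ≤ M := Nat.one_le_iff_ne_zero.mpr (by positivity)
    have hn : nJ * p ^ (J + 1) - 1 = p * (M - 1) + (p - 1) := by
      have h4 : nJ * p ^ (J + 1) = p * M := by rw [hM]; ring
      have h5 : p * (M - 1) + p = p * M := by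
        calc p * (M - 1) + p = p * ((M - 1) + 1) := by ring
          _ = p * M := by rw [show M - 1 + 1 = M by omega]
      omega
    rw [hn] at hj hdvd
    have hmod : (p * (M - 1) + (p - 1)) % p = p - 1 := by
      rw [Nat.mul_add_mod, Nat.mod_eq_of_lt (by omega)]
    have hdiv : (p * (M - 1) + (p - 1)) / p = M - 1 := by
      rw [Nat.mul_add_div (by omega), Nat.div_eq_of_lt (by omega), Nat.add_zero]
    have key := Choose.choose_modEq_choose_mod_mul_choose_div_nat
      (p := p) (n := p * (M - 1) + (p - 1)) (k := j)
    rw [hmod, hdiv] at key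
    have hdvd2 : p ∣ (p - 1).choose (j % p) * (M - 1).choose (j / p) :=
      Nat.modEq_zero_iff_dvd.mp (key.symm.trans (Nat.modEq_zero_iff_dvd.mpr hdvd))
    rcases (Nat.Prime.dvd_mul hp).mp hdvd2 with h | h
    · have : j % p < p := Nat.mod_lt _ (by omega)
      exact small_not_dvd hp (by omega) (by omega) h
    · refine ih nJ h1 h2 (j / p) ?_ h
      calc j / p ≤ (p * (M - 1) + (p - 1)) / p := Nat.div_le_div_right hj
        _ = M - 1 := hdiv

lemma claimB {p : ℕ} (hp : p.Prime) :
    ∀ n, (∀ j ≤ n, ¬ p ∣ n.choose j) →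
      ∃ J nJ : ℕ, 1 ≤ nJ ∧ nJ < p ∧ n + 1 = nJ * p ^ J := by
  haveI : Fact p.Prime := ⟨hp⟩
  have hp2 := hp.two_le
  intro n
  induction n using Nat.strong_induction_on with
  | _ n ih =>
    intro hchoose
    rcases lt_or_ge n p with hlt | hge
    · rcases eq_or_lt_of_le (show n + 1 ≤ p by omega) with he | hl
      · exact ⟨1, 1, le_rfl, by omega, by simpa using he⟩
      · exact ⟨0, n + 1, by omega, hl, by simp⟩
    · set m := n / p with hm
      set d := n % p with hd
      have hnd : n = p * m + d := by rw [hm, hd]; exact (Nat.div_add_mod n p).symm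
      have hm1 : 1 ≤ m := Nat.one_le_div_iff (by omega) |>.mpr hge
      have hdp : d < p := Nat.mod_lt _ (by omega)
      -- d = p - 1
      have hdeq : d = p - 1 := by
        by_contra hne
        have hd1 : d + 1 < p := by omega
        have hj : d + 1 ≤ n := by omega
        have key := Choose.choose_modEq_choose_mod_mul_choose_div_nat
          (p := p) (n := n) (k := d + 1)
        rw [← hd, ← hm, Nat.mod_eq_of_lt hd1, Nat.div_eq_of_lt hd1,
          show d.choose (d + 1) = 0 from Nat.choose_eq_zero_of_lt (by omega),
          Nat.zero_mul] at key
        exact hchoose (d + 1) hj (Nat.modEq_zero_iff_dvd.mp key)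
      -- hypothesis for m
      have hrec : ∀ i ≤ m, ¬ p ∣ m.choose i := by
        intro i hi hdvd
        have hj : p * i ≤ n := by
          calc p * i ≤ p * m := Nat.mul_le_mul_left _ hi
            _ ≤ n := by omega
        have key := Choose.choose_modEq_choose_mod_mul_choose_div_nat
          (p := p) (n := n) (k := p * i)
        rw [← hd, ← hm, Nat.mul_mod_right, Nat.mul_div_cancel_left i (by omega : 0 < p),
          Nat.choose_zero_right, Nat.one_mul] at key
        exact hchoose (p * i) hj (Nat.modEq_zero_iff_dvd.mp (key.trans
          (Nat.modEq_zero_iff_dvd.mpr hdvd)))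
      obtain ⟨J, nJ, h1, h2, h3⟩ := ih m (Nat.div_lt_self (by omega) (by omega)) hrec
      refine ⟨J + 1, nJ, h1, h2, ?_⟩
      have h4 : nJ * p ^ (J + 1) = (m + 1) * p := by
        rw [pow_succ, ← Nat.mul_assoc, ← h3]
      have h5 : (m + 1) * p = p * m + p := by ring
      omega

lemma master {F : Type} [Field F] (a b : ℕ) (x y : F) :
    ∑ s ∈ Finset.range (a + 1), (a.choose s : F) * x ^ (a - s) * ((s.choose b : F) * y ^ (s - b))
      = (a.choose b : F) * (x + y) ^ (a - b) := by
  rcases le_or_gt b a with hba | hab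
  · have hsub : Finset.Ico b (a + 1) ⊆ Finset.range (a + 1) := by
      intro t ht
      simp only [Finset.mem_Ico] at ht
      simp only [Finset.mem_range]
      omega
    rw [← Finset.sum_subset hsub (fun t ht hnt => by
      simp only [Finset.mem_range] at ht
      simp only [Finset.mem_Ico, not_and, not_le] at hnt
      have : t < b := by omega
      rw [Nat.choose_eq_zero_of_lt this]
      push_cast
      ring)]
    rw [Finset.sum_Ico_eq_sum_range]
    have hN : a + 1 - b = (a - b) + 1 := by omega
    rw [hN]
    have hterm : ∀ i ∈ Finset.range ((a - b) + 1),
        (a.choose (b + i) : F) * x ^ (a - (b + i)) * (((b + i).choose b : F) * y ^ (b + i - b))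
          = (a.choose b : F) * (y ^ i * x ^ ((a - b) - i) * ((a - b).choose i : F)) := by
      intro i hi
      simp only [Finset.mem_range] at hi
      have key : a.choose (b + i) * (b + i).choose b = a.choose b * (a - b).choose i := by
        rw [Nat.choose_mul (by omega), Nat.add_sub_cancel_left]
      have keyF : (a.choose (b + i) : F) * ((b + i).choose b : F)
          = (a.choose b : F) * ((a - b).choose i : F) := by exact_mod_cast congrArg Nat.cast key
      rw [show a - (b + i) = (a - b) - i by omega, show b + i - b = i by omega]
      linear_combination x ^ ((a - b) - i) * y ^ i * keyF
    rw [Finset.sum_congr rfl hterm, ← Finset.mul_sum, add_comm x y, add_pow]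
  · rw [Nat.choose_eq_zero_of_lt hab]
    push_cast
    rw [zero_mul]
    apply Finset.sum_eq_zero
    intro s hs
    simp only [Finset.mem_range] at hs
    rw [Nat.choose_eq_zero_of_lt (show s < b by omega)]
    push_cast
    ring

lemma oscSub_sum {F : Type} [Field F] {n : ℕ} {u : F} {v : Fin (n + 1) → F}
    (hv : v ∈ oscSub F n u n) :
    ∑ r : Fin (n + 1), (n.choose r.1 : F) * (-u) ^ (n - r.1) * v r = 0 := by
  induction hv using Submodule.span_induction with
  | mem x hx =>
    obtain ⟨s, rfl⟩ := hx
    have h := master (F := F) n s.1 (-u) u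
    rw [neg_add_cancel, zero_pow (by have := s.2; omega : n - s.1 ≠ 0), mul_zero] at h
    rw [← Fin.sum_univ_eq_sum_range
      (fun r => (n.choose r : F) * (-u) ^ (n - r) * ((r.choose s.1 : F) * u ^ (r - s.1)))] at h
    exact h
  | zero => simp
  | add x y hx hy ihx ihy =>
    simp only [Pi.add_apply, mul_add, Finset.sum_add_distrib, ihx, ihy, add_zero]
  | smul a x hx ihx =>
    simp only [Pi.smul_apply, smul_eq_mul]
    calc ∑ r : Fin (n + 1), (n.choose r.1 : F) * (-u) ^ (n - r.1) * (a * x r)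
        = a * ∑ r : Fin (n + 1), (n.choose r.1 : F) * (-u) ^ (n - r.1) * x r := by
          rw [Finset.mul_sum]; exact Finset.sum_congr rfl fun r _ => by ring
      _ = 0 := by rw [ihx, mul_zero]

lemma oscInfty_apply {F : Type} [Field F] {n c : ℕ} {v : Fin (n + 1) → F}
    (hv : v ∈ oscInfty F n c) (r : Fin (n + 1)) (hr : r.1 + c ≤ n) : v r = 0 := by
  induction hv using Submodule.span_induction with
  | mem x hx =>
    obtain ⟨i, hi, rfl⟩ := hx
    exact Pi.single_eq_of_ne (by
      intro h
      rw [Fin.ext_iff] at h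
      omega) 1
  | zero => rfl
  | add x y hx hy ihx ihy => simp [ihx, ihy]
  | smul a x hx ihx => simp [ihx]

lemma single_mem_oscSub {F : Type} [Field F] {n : ℕ} (j : Fin (n + 1))
    (hj : (n.choose j.1 : F) = 0) (u : F) : Pi.single j (1 : F) ∈ oscSub F n u n := by
  have hjn : j.1 ≠ n := by
    intro h
    rw [h, Nat.choose_self, Nat.cast_one] at hj
    exact one_ne_zero hj
  have hrepr : Pi.single j (1 : F) = ∑ s : Fin n,
      ((s.1.choose j.1 : F) * (-u) ^ (s.1 - j.1)) •
        (fun r : Fin (n + 1) => (r.1.choose s.1 : F) * u ^ (r.1 - s.1)) := by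
    funext r
    rw [Finset.sum_apply]
    simp only [Pi.smul_apply, smul_eq_mul]
    rw [Finset.sum_congr rfl (fun s _ => by
      ring : ∀ s ∈ Finset.univ, ((s : Fin n).1.choose j.1 : F) * (-u) ^ (s.1 - j.1) *
        ((r.1.choose s.1 : F) * u ^ (r.1 - s.1)) =
        (r.1.choose s.1 : F) * u ^ (r.1 - s.1) * ((s.1.choose j.1 : F) * (-u) ^ (s.1 - j.1)))]
    rw [Fin.sum_univ_eq_sum_range
      (fun s => (r.1.choose s : F) * u ^ (r.1 - s) * ((s.choose j.1 : F) * (-u) ^ (s - j.1)))]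
    rcases lt_or_eq_of_le (show r.1 ≤ n by omega) with hrn | hrn
    · -- r.1 < n
      have hsub : Finset.range (r.1 + 1) ⊆ Finset.range n := by
        intro t ht; simp only [Finset.mem_range] at *; omega
      rw [← Finset.sum_subset hsub (fun t ht hnt => by
        simp only [Finset.mem_range] at ht hnt
        rw [Nat.choose_eq_zero_of_lt (show r.1 < t by omega)]
        push_cast; ring)]
      rw [master r.1 j.1 u (-u), add_neg_cancel]
      rcases eq_or_ne r j with rfl | hne
      · rw [Nat.choose_self, Nat.sub_self, pow_zero, Nat.cast_one, one_mul,
          Pi.single_eq_same]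
      · rw [Pi.single_eq_of_ne hne]
        rcases lt_or_ge r.1 j.1 with hlt | hle
        · rw [Nat.choose_eq_zero_of_lt hlt, Nat.cast_zero, zero_mul]
        · have : r.1 ≠ j.1 := fun h => hne (Fin.ext h)
          rw [zero_pow (by omega : r.1 - j.1 ≠ 0), mul_zero]
    · -- r.1 = n
      have h := master (F := F) n j.1 u (-u)
      rw [add_neg_cancel, hj, zero_mul, Finset.sum_range_succ, hj] at h
      have hne : r ≠ j := fun h' => hjn (by rw [← h']; omega)
      rw [Pi.single_eq_of_ne hne, hrn]
      have hlast : (n.choose n : F) * u ^ (n - n) * ((0 : F) * (-u) ^ (n - j.1)) = 0 := by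
        ring
      rw [hlast, add_zero] at h
      rw [h]
  rw [hrepr]
  exact Submodule.sum_mem _ fun s _ =>
    Submodule.smul_mem _ _ (Submodule.subset_span ⟨s, rfl⟩)

lemma nucleus_mono {F : Type} [Field F] {n c c' : ℕ} (h : c ≤ c') :
    nucleus F n c ≤ nucleus F n c' := by
  apply inf_le_inf
  · exact iInf_mono fun u => Submodule.span_mono (by
      rintro _ ⟨s, rfl⟩
      exact ⟨⟨s.1, lt_of_lt_of_le s.2 h⟩, rfl⟩)
  · exact Submodule.span_mono (by
      rintro _ ⟨i, hi, rfl⟩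
      exact ⟨i, by omega, rfl⟩)

/-- Over a field of characteristic `p > 0` with `#F ≥ n` and `n ≥ 2`, all nuclei of the
normal rational curve `V_1^n` are empty (zero) if and only if `n + 1 = n_J · p^J` for
some `J ∈ ℕ` and `1 ≤ n_J < p`, i.e. `n = ⟨n_J, p−1, …, p−1⟩` in base `p`. -/
theorem all_nuclei_empty_iff (F : Type) [Field F] (p : ℕ) (hp : p.Prime) [CharP F p]
    (n : ℕ) (hn : 2 ≤ n) (hF : (n : Cardinal) ≤ Cardinal.mk F) :
    (∀ c ≤ n, nucleus F n c = ⊥) ↔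
      ∃ J nJ : ℕ, 1 ≤ nJ ∧ nJ < p ∧ n + 1 = nJ * p ^ J := by
  haveI : Fact p.Prime := ⟨hp⟩
  constructor
  · intro h
    apply claimB hp n
    intro j hj hdvd
    have hj0 : (n.choose j : F) = 0 := (CharP.cast_eq_zero_iff F p _).mpr hdvd
    have hj1 : 1 ≤ j := by
      rcases Nat.eq_zero_or_pos j with rfl | h1
      · rw [Nat.choose_zero_right] at hdvd
        have := Nat.le_of_dvd one_pos hdvd
        have := hp.two_le
        omega
      · exact h1
    set jf : Fin (n + 1) := ⟨j, by omega⟩ with hjf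
    have hmem : Pi.single jf (1 : F) ∈ nucleus F n n := by
      refine Submodule.mem_inf.mpr ⟨Submodule.mem_iInf _ |>.mpr
        fun u => single_mem_oscSub jf hj0 u, Submodule.subset_span ⟨jf, by
          simp only [hjf]
          omega, rfl⟩⟩
    rw [h n le_rfl, Submodule.mem_bot] at hmem
    have h1 := congrFun hmem jf
    rw [Pi.single_eq_same] at h1
    exact one_ne_zero h1
  · rintro ⟨J, nJ, h1, h2, h3⟩ c hc
    have hnn : n = nJ * p ^ J - 1 := by omega
    have hch : ∀ j : Fin (n + 1), (n.choose j.1 : F) ≠ 0 := by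
      intro j hz
      have hd : p ∣ n.choose j.1 := (CharP.cast_eq_zero_iff F p _).mp hz
      refine claimA hp J nJ h1 h2 j.1 (by omega) ?_
      rw [← hnn]
      exact hd
    rw [eq_bot_iff]
    refine le_trans (nucleus_mono hc) ?_
    intro v hv
    obtain ⟨hv1, hv2⟩ := Submodule.mem_inf.mp hv
    have hsum : ∀ u : F, ∑ r : Fin (n + 1), (n.choose r.1 : F) * (-u) ^ (n - r.1) * v r = 0 :=
      fun u => oscSub_sum (Submodule.mem_iInf _ |>.mp hv1 u)
    have h0 : v 0 = 0 := oscInfty_apply hv2 0 (by simp)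
    set Q : Polynomial F :=
      ∑ r : Fin (n + 1), Polynomial.C ((n.choose r.1 : F) * v r) * Polynomial.X ^ (n - r.1)
      with hQdef
    have heval : ∀ t : F, Q.eval t = 0 := by
      intro t
      rw [hQdef]
      simp only [Polynomial.eval_finset_sum, Polynomial.eval_mul, Polynomial.eval_C,
        Polynomial.eval_pow, Polynomial.eval_X]
      have hs := hsum (-t)
      simp only [neg_neg] at hs
      rw [← hs]
      exact Finset.sum_congr rfl fun r _ => by ring
    have hdeg : Q.natDegree ≤ n - 1 := by
      apply Polynomial.natDegree_sum_le_of_forall_le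
      intro r _
      rcases eq_or_ne r (0 : Fin (n + 1)) with rfl | hr
      · simp [h0]
      · refine (Polynomial.natDegree_C_mul_le _ _).trans ?_
        rw [Polynomial.natDegree_X_pow]
        have : r.1 ≠ 0 := fun h => hr (Fin.ext h)
        omega
    have hQ0 : Q = 0 := by
      apply Polynomial.eq_zero_of_forall_eval_zero_of_natDegree_lt_card Q heval
      calc (Q.natDegree : Cardinal) ≤ ((n - 1 : ℕ) : Cardinal) := Nat.cast_le.mpr hdeg
        _ < (n : Cardinal) := Nat.cast_lt.mpr (by omega)
        _ ≤ Cardinal.mk F := hF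
    rw [Submodule.mem_bot]
    funext r
    rcases eq_or_ne r (0 : Fin (n + 1)) with rfl | hr
    · exact h0
    · have hco : Q.coeff (n - r.1) = (n.choose r.1 : F) * v r := by
        rw [hQdef, Polynomial.finset_sum_coeff]
        rw [Finset.sum_eq_single r]
        · rw [Polynomial.coeff_C_mul, Polynomial.coeff_X_pow, if_pos rfl, mul_one]
        · intro b _ hb
          rw [Polynomial.coeff_C_mul, Polynomial.coeff_X_pow, if_neg, mul_zero]
          intro he
          have hb' : b.1 ≠ r.1 := fun hh => hb (Fin.ext hh)
          have hbb := b.2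
          have hrr := r.2
          omega
        · simp
      rw [hQ0, Polynomial.coeff_zero] at hco
      have := mul_eq_zero.mp hco.symm
      rcases this with hz | hz
      · exact absurd hz (hch r)
      · exact hz
end

section
/- Let F be a field of characteristic p > 0, n ≥ 2, j ∈ {0,...,n}, and define Ω(j) := {m : 0 ≤ m ≤ n, C(m,j) ≢ 0 mod p} and Ψ(j) := {j, n−j}. Then both Λ ↦ Ω(Λ) := ∪_{j∈Λ} Ω(j) and Λ ↦ Ψ(Λ) := ∪_{j∈Λ} {j, n−j} are closure operators on subsets of {0,1,...,n}: they are extensive (Λ ⊆ Ω(Λ) and Λ ⊆ Ψ(Λ)), monotone, and idempotent. -/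
/-- `Ω(j) = {m | 0 ≤ m ≤ n, C(m,j) ≢ 0 mod p}`. -/
def OmegaJ (p n j : ℕ) : Finset ℕ :=
  (Finset.range (n + 1)).filter fun m => ¬ p ∣ Nat.choose m j

/-- `Ω(Λ) = ∪_{j ∈ Λ} Ω(j)`. -/
def OmegaCl (p n : ℕ) (Λ : Finset ℕ) : Finset ℕ := Λ.biUnion (OmegaJ p n)

/-- `Ψ(Λ) = ∪_{j ∈ Λ} {j, n − j}`. -/
def PsiCl (n : ℕ) (Λ : Finset ℕ) : Finset ℕ := Λ.biUnion fun j => {j, n - j}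

/-- For a prime `p` (the characteristic) and `n ≥ 2`, both `Ω` and `Ψ` are closure
operators on the subsets of `{0, 1, …, n}`: they are extensive, monotone, and
idempotent. -/
theorem omega_psi_closure_operators (p n : ℕ) (hp : p.Prime) (hn : 2 ≤ n) :
    (∀ Λ : Finset ℕ, Λ ⊆ Finset.range (n + 1) → Λ ⊆ OmegaCl p n Λ) ∧
    (∀ Λ : Finset ℕ, Λ ⊆ Finset.range (n + 1) → Λ ⊆ PsiCl n Λ) ∧
    (∀ Λ Λ' : Finset ℕ, Λ ⊆ Λ' → OmegaCl p n Λ ⊆ OmegaCl p n Λ') ∧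
    (∀ Λ Λ' : Finset ℕ, Λ ⊆ Λ' → PsiCl n Λ ⊆ PsiCl n Λ') ∧
    (∀ Λ : Finset ℕ, Λ ⊆ Finset.range (n + 1) →
      OmegaCl p n (OmegaCl p n Λ) = OmegaCl p n Λ) ∧
    (∀ Λ : Finset ℕ, Λ ⊆ Finset.range (n + 1) → PsiCl n (PsiCl n Λ) = PsiCl n Λ) := by
  have hextO : ∀ Λ : Finset ℕ, Λ ⊆ Finset.range (n + 1) → Λ ⊆ OmegaCl p n Λ := by
    intro Λ hΛ j hj
    refine Finset.mem_biUnion.2 ⟨j, hj, ?_⟩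
    simp only [OmegaJ, Finset.mem_filter]
    refine ⟨hΛ hj, ?_⟩
    rw [Nat.choose_self]
    exact fun h => hp.one_lt.ne' (Nat.le_antisymm (Nat.le_of_dvd one_pos h) hp.one_lt.le ▸ rfl)
  have hextP : ∀ Λ : Finset ℕ, Λ ⊆ Finset.range (n + 1) → Λ ⊆ PsiCl n Λ := by
    intro Λ hΛ j hj
    exact Finset.mem_biUnion.2 ⟨j, hj, by simp⟩
  have hOsub : ∀ Λ : Finset ℕ, OmegaCl p n Λ ⊆ Finset.range (n + 1) := by
    intro Λ m hm
    obtain ⟨j, _, hmj⟩ := Finset.mem_biUnion.1 hm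
    exact (Finset.mem_filter.1 hmj).1
  have hPsub : ∀ Λ : Finset ℕ, Λ ⊆ Finset.range (n + 1) →
      PsiCl n Λ ⊆ Finset.range (n + 1) := by
    intro Λ hΛ m hm
    obtain ⟨j, hj, hmj⟩ := Finset.mem_biUnion.1 hm
    simp only [Finset.mem_insert, Finset.mem_singleton] at hmj
    rcases hmj with rfl | rfl
    · exact hΛ hj
    · exact Finset.mem_range.2 (Nat.lt_succ_of_le (Nat.sub_le _ _))
  refine ⟨hextO, hextP, ?_, ?_, ?_, ?_⟩
  · exact fun Λ Λ' h => Finset.biUnion_subset_biUnion_of_subset_left _ h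
  · exact fun Λ Λ' h => Finset.biUnion_subset_biUnion_of_subset_left _ h
  · intro Λ hΛ
    apply Finset.Subset.antisymm
    · intro k hk
      obtain ⟨m, hm, hkm⟩ := Finset.mem_biUnion.1 hk
      obtain ⟨j, hj, hmj⟩ := Finset.mem_biUnion.1 hm
      simp only [OmegaJ, Finset.mem_filter] at hkm hmj
      refine Finset.mem_biUnion.2 ⟨j, hj, ?_⟩
      simp only [OmegaJ, Finset.mem_filter]
      refine ⟨hkm.1, fun hdvd => ?_⟩
      -- show p ∣ C(k,m) * C(m,j), contradicting non-divisibility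
      have hjm : j ≤ m := by
        by_contra h
        exact hmj.2 (Nat.choose_eq_zero_of_lt (lt_of_not_ge h) ▸ dvd_zero p)
      have hmk : m ≤ k := by
        by_contra h
        exact hkm.2 (Nat.choose_eq_zero_of_lt (lt_of_not_ge h) ▸ dvd_zero p)
      have := Nat.choose_mul (n := k) hjm
      have hpd : p ∣ k.choose m * m.choose j := by
        rw [this]; exact Dvd.dvd.mul_right hdvd _
      rcases hp.dvd_mul.1 hpd with h | h
      · exact hkm.2 h
      · exact hmj.2 h
    · exact hextO _ (hOsub Λ)
  · intro Λ hΛ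
    apply Finset.Subset.antisymm
    · intro k hk
      obtain ⟨m, hm, hkm⟩ := Finset.mem_biUnion.1 hk
      obtain ⟨j, hj, hmj⟩ := Finset.mem_biUnion.1 hm
      have hjn : j ≤ n := Nat.lt_succ_iff.1 (Finset.mem_range.1 (hΛ hj))
      simp only [Finset.mem_insert, Finset.mem_singleton] at hkm hmj
      refine Finset.mem_biUnion.2 ⟨j, hj, ?_⟩
      simp only [Finset.mem_insert, Finset.mem_singleton]
      rcases hmj with rfl | rfl
      · exact hkm
      · rcases hkm with rfl | rfl
        · exact Or.inr rfl
        · exact Or.inl (Nat.sub_sub_self hjn)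
    · exact hextP _ (hPsub Λ hΛ)
end

section
/- The (m−1, t−1)-nucleus of the Veronese variety V_m^t (the intersection of all osculating hyperplanes) contains exactly those base points F·c_{e_0,...,e_m} for which the multinomial coefficient C(t; e_0,...,e_m) ≡ 0 mod char F. Moreover, if #F ≥ t then this nucleus is spanned by those base points. -/
/-- The index set `E^t_m` of `(m+1)`-tuples of non-negative integers summing to `t`,
indexing the basis `{c_e}` of the ambient space of the Veronese variety `V_m^t`. -/
abbrev VeroIdx (m t : ℕ) : Type := {e : Fin (m + 1) → ℕ // e ∈ Finset.Nat.antidiagonalTuple (m + 1) t}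

/-- The linear form, in the coordinates with respect to the basis `{c_e}`, whose kernel
is the osculating hyperplane of the Veronese variety `V_m^t` corresponding to the
hyperplane `Σ a_i X_i = 0` of the parameter space: its `e`-th coefficient is
`C(t; e_0,…,e_m) · a_0^{e_0} ⋯ a_m^{e_m}`. -/
noncomputable def veroForm (F : Type) [Field F] (m t : ℕ) (a : Fin (m + 1) → F) :
    (VeroIdx m t → F) →ₗ[F] F :=
  ∑ e : VeroIdx m t,
    ((Nat.multinomial Finset.univ e.1 : F) * ∏ i, a i ^ e.1 i) • LinearMap.proj e

/-- The `(m−1, t−1)`-nucleus of the Veronese variety `V_m^t`: the intersection of all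
its osculating hyperplanes. -/
noncomputable def veroNucleus (F : Type) [Field F] (m t : ℕ) :
    Submodule F (VeroIdx m t → F) :=
  ⨅ (a : Fin (m + 1) → F) (_ : a ≠ 0), LinearMap.ker (veroForm F m t a)

lemma veroForm_apply (F : Type) [Field F] (m t : ℕ) (a : Fin (m + 1) → F)
    (x : VeroIdx m t → F) :
    veroForm F m t a x = ∑ e : VeroIdx m t,
      ((Nat.multinomial Finset.univ e.1 : F) * ∏ i, a i ^ e.1 i) * x e := by
  simp [veroForm, smul_eq_mul]

lemma mem_veroNucleus_iff (F : Type) [Field F] (m t : ℕ) (x : VeroIdx m t → F) :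
    x ∈ veroNucleus F m t ↔
      ∀ a : Fin (m + 1) → F, a ≠ 0 → veroForm F m t a x = 0 := by
  simp [veroNucleus, Submodule.mem_iInf, LinearMap.mem_ker]

lemma veroForm_single (F : Type) [Field F] (m t : ℕ) (a : Fin (m + 1) → F)
    (e : VeroIdx m t) :
    veroForm F m t a (Pi.single e (1 : F)) =
      (Nat.multinomial Finset.univ e.1 : F) * ∏ i, a i ^ e.1 i := by
  classical
  rw [veroForm_apply]
  rw [Finset.sum_eq_single e]
  · simp
  · intro b _ hb
    simp [Pi.single_apply, hb.symm]
  · simp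

lemma vero_prod_pow_symm {k : ℕ} {F : Type} [Field F] (r : Fin k → F) (g : Fin k → ℕ) :
    (Finsupp.equivFunOnFinite.symm g).prod (fun i n => r i ^ n) = ∏ i, r i ^ g i := by
  classical
  rw [Finsupp.prod]
  refine Finset.prod_subset (Finset.subset_univ _) ?_
  intro i _ hi
  have h0 : (Finsupp.equivFunOnFinite.symm g) i = 0 := Finsupp.notMem_support_iff.mp hi
  have : g i = 0 := h0
  simp [this]

lemma vero_degree_symm {k : ℕ} (g : Fin k → ℕ) :
    (Finsupp.equivFunOnFinite.symm g).degree = ∑ i, g i := by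
  classical
  rw [Finsupp.degree]
  refine Finset.sum_subset (Finset.subset_univ _) ?_
  intro i _ hi
  exact Finsupp.notMem_support_iff.mp hi

/-- The `(m−1, t−1)`-nucleus of the Veronese variety `V_m^t` contains exactly those base
points `F·c_e` with `C(t; e_0,…,e_m) ≡ 0 mod char F` (i.e. vanishing in `F`);
moreover, if `#F ≥ t` then the nucleus is spanned by those base points. -/
theorem veroNucleus_base_points (F : Type) [Field F] (m t : ℕ) (hm : 1 ≤ m) (ht : 2 ≤ t) :
    (∀ e : VeroIdx m t,
        Pi.single e (1 : F) ∈ veroNucleus F m t ↔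
          (Nat.multinomial Finset.univ e.1 : F) = 0) ∧
    ((t : Cardinal) ≤ Cardinal.mk F →
      veroNucleus F m t = Submodule.span F
        {v | ∃ e : VeroIdx m t,
          (Nat.multinomial Finset.univ e.1 : F) = 0 ∧ v = Pi.single e 1}) := by
  classical
  have hgen : ∀ e : VeroIdx m t, (Nat.multinomial Finset.univ e.1 : F) = 0 →
      Pi.single e (1 : F) ∈ veroNucleus F m t := by
    intro e hC
    rw [mem_veroNucleus_iff]
    intro a _
    rw [veroForm_single, hC, zero_mul]
  constructor
  · intro e
    constructor
    · intro h
      have hone : (fun _ : Fin (m + 1) => (1 : F)) ≠ 0 := by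
        intro h1
        have := congrFun h1 0
        simp at this
      have h2 := (mem_veroNucleus_iff F m t _).1 h _ hone
      simpa [veroForm_single] using h2
    · exact hgen e
  · intro hcard
    refine le_antisymm ?_ ?_
    · -- nucleus ≤ span
      intro x hx
      set p : MvPolynomial (Fin (m + 1)) F :=
        ∑ e : VeroIdx m t, MvPolynomial.monomial (Finsupp.equivFunOnFinite.symm e.1)
          ((Nat.multinomial Finset.univ e.1 : F) * x e) with hp
      have hhom : p.IsHomogeneous t := by
        refine MvPolynomial.IsHomogeneous.sum _ _ _ ?_
        intro e _
        refine MvPolynomial.isHomogeneous_monomial _ ?_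
        rw [vero_degree_symm]
        exact Finset.Nat.mem_antidiagonalTuple.mp e.2
      have hevform : ∀ r : Fin (m + 1) → F, MvPolynomial.eval r p = veroForm F m t r x := by
        intro r
        rw [hp, map_sum, veroForm_apply]
        refine Finset.sum_congr rfl fun e _ => ?_
        rw [MvPolynomial.eval_monomial, vero_prod_pow_symm]
        ring
      have heval : ∀ r : Fin (m + 1) → F, MvPolynomial.eval r p = 0 := by
        intro r
        rw [hevform]
        by_cases hr : r = 0
        · subst hr
          rw [veroForm_apply]
          refine Finset.sum_eq_zero fun e _ => ?_
          obtain ⟨i, hi⟩ : ∃ i, e.1 i ≠ 0 := by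
            by_contra hall
            push_neg at hall
            have := Finset.Nat.mem_antidiagonalTuple.mp e.2
            simp [hall] at this
            omega
          have : (∏ i, (0 : F) ^ e.1 i) = 0 :=
            Finset.prod_eq_zero (Finset.mem_univ i) (by rw [zero_pow hi])
          simp [this]
        · exact (mem_veroNucleus_iff F m t x).1 hx r hr
      have hp0 : p = 0 :=
        hhom.eq_zero_of_forall_eval_eq_zero_of_le_card heval hcard
      have hcoeffs : ∀ e : VeroIdx m t,
          (Nat.multinomial Finset.univ e.1 : F) * x e = 0 := by
        intro e
        have h := congrArg (MvPolynomial.coeff (Finsupp.equivFunOnFinite.symm e.1)) hp0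
        rw [hp] at h
        rw [MvPolynomial.coeff_sum] at h
        simp only [MvPolynomial.coeff_monomial, MvPolynomial.coeff_zero] at h
        rw [Finset.sum_eq_single e] at h
        · simpa using h
        · intro b _ hb
          rw [if_neg]
          exact fun hgeq => hb (Subtype.ext (Finsupp.equivFunOnFinite.symm.injective hgeq))
        · simp
      have hxsum : x = ∑ e : VeroIdx m t, x e • (Pi.single e (1 : F) : VeroIdx m t → F) := by
        funext e'
        simp [Finset.sum_apply, Pi.single_apply, mul_ite, Finset.sum_ite_eq]
      rw [hxsum]
      refine Submodule.sum_mem _ fun e _ => ?_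
      by_cases hC : (Nat.multinomial Finset.univ e.1 : F) = 0
      · exact Submodule.smul_mem _ _ (Submodule.subset_span ⟨e, hC, rfl⟩)
      · have hx0 : x e = 0 := (mul_eq_zero.mp (hcoeffs e)).resolve_left hC
        rw [hx0, zero_smul]
        exact Submodule.zero_mem _
    · -- span ≤ nucleus
      rw [Submodule.span_le]
      rintro v ⟨e, hC, rfl⟩
      exact hgen e hC
end

section
/- Let F be a field of characteristic p > 0 with #F ≥ t, m ≥ 1, t ≥ 2, and let t_σ be the base-p digits of t. The (m−1, t−1)-nucleus of the Veronese variety V_m^t has projective dimension C(m+t, t) − Π_{σ∈ℕ} C(m + t_σ, t_σ) − 1. -/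
/-- The σ-th digit of `x` in base `p`. -/
def digit (p x σ : ℕ) : ℕ := x / p ^ σ % p

namespace VeroAux


variable {p : ℕ}

lemma digit_lt (hp : 1 < p) (x σ : ℕ) : digit p x σ < p := Nat.mod_lt _ (by omega)
lemma digit_zero_left (x : ℕ) : digit p x 0 = x % p := by simp [digit]
lemma digit_succ (x σ : ℕ) : digit p x (σ + 1) = digit p (x / p) σ := by
  simp [digit, pow_succ, Nat.div_div_eq_div_mul, mul_comm]
lemma digit_eq_zero_of_lt {x σ : ℕ} (h : x < p ^ σ) : digit p x σ = 0 := by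
  simp [digit, Nat.div_eq_of_lt h]

/-- Lucas: nondivisibility of a binomial coefficient in terms of digit domination. -/
lemma not_dvd_choose_iff (hp : p.Prime) (a b : ℕ) :
    ¬ p ∣ (a + b).choose a ↔ ∀ σ, digit p a σ ≤ digit p (a + b) σ := by
  have : Fact p.Prime := ⟨hp⟩
  obtain ⟨A, hA⟩ : ∃ A, a + b < p ^ A := by
    exact ⟨a + b, lt_of_lt_of_le (Nat.lt_two_pow_self (n := _)) (Nat.pow_le_pow_left hp.two_le _)⟩
  have hmod := Choose.choose_modEq_prod_range_choose_nat (p := p)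
      (n := a + b) (k := a) hA (by omega)
  have hdvd : p ∣ (a + b).choose a ↔ p ∣ ∏ σ ∈ Finset.range A,
      ((a + b) / p ^ σ % p).choose (a / p ^ σ % p) :=
    (Nat.ModEq.dvd_iff hmod dvd_rfl)
  rw [hdvd, hp.prime.dvd_finset_prod_iff]
  constructor
  · intro h σ
    by_cases hσ : σ < A
    · by_contra hlt
      push_neg at hlt
      exact h ⟨σ, Finset.mem_range.mpr hσ, Nat.choose_eq_zero_of_lt hlt ▸ dvd_zero p⟩
    · push_neg at hσ
      have h1 : a < p ^ σ := lt_of_le_of_lt (by omega) (lt_of_lt_of_le hA (Nat.pow_le_pow_right hp.pos hσ))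
      have h2 : a + b < p ^ σ := lt_of_lt_of_le hA (Nat.pow_le_pow_right hp.pos hσ)
      simp [digit_eq_zero_of_lt h1, digit_eq_zero_of_lt h2]
  · rintro h ⟨σ, -, hσ⟩
    have hle : a / p ^ σ % p ≤ (a + b) / p ^ σ % p := h σ
    have : ¬ p ∣ ((a + b) / p ^ σ % p).choose (a / p ^ σ % p) := by
      intro hdvd'
      have hid := Nat.choose_mul_factorial_mul_factorial hle
      have hd2 : p ∣ ((a + b) / p ^ σ % p).choose (a / p ^ σ % p) *
          Nat.factorial (a / p ^ σ % p) *
          Nat.factorial ((a + b) / p ^ σ % p - a / p ^ σ % p) :=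
        Dvd.dvd.mul_right (Dvd.dvd.mul_right hdvd' _) _
      rw [hid] at hd2
      rw [hp.dvd_factorial] at hd2
      exact absurd hd2 (by simpa using Nat.mod_lt _ hp.pos)
    exact this hσ

/-- If all digits of `a` are dominated by those of `a + b`, the addition is carry-free. -/
lemma digit_add_of_le (hp : 1 < p) : ∀ n a b, a + b = n →
    (∀ σ, digit p a σ ≤ digit p n σ) →
    ∀ σ, digit p a σ + digit p b σ = digit p n σ := by
  intro n
  induction n using Nat.strong_induction_on with
  | _ n ih =>
    intro a b hab h σ
    have h0 : a % p + b % p < p := by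
      by_contra hge
      push_neg at hge
      have hmod : n % p = a % p + b % p - p := by
        have h1 : (a + b) % p = (a % p + b % p) % p := by
          conv_lhs => rw [Nat.add_mod]
        have h2 : a % p + b % p < 2 * p := by
          have := Nat.mod_lt a (show 0 < p by omega)
          have := Nat.mod_lt b (show 0 < p by omega)
          omega
        rw [← hab, h1, Nat.mod_eq_sub_mod hge, Nat.mod_eq_of_lt (by omega)]
      have := h 0
      rw [digit_zero_left, digit_zero_left, hmod] at this
      have := Nat.mod_lt b (show 0 < p by omega)
      omega
    have hdiv : n / p = a / p + b / p := by
      subst hab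
      rw [Nat.add_div (show 0 < p by omega), if_neg (by omega)]
      omega
    rcases Nat.eq_zero_or_pos n with hn | hn
    · subst hab
      simp at hn
      simp [hn.1, hn.2, digit]
    cases σ with
    | zero =>
      rw [digit_zero_left, digit_zero_left, digit_zero_left, ← hab, Nat.add_mod,
        Nat.mod_eq_of_lt h0]
    | succ σ =>
      rw [digit_succ, digit_succ, digit_succ]
      refine ih (n / p) (Nat.div_lt_self hn hp) (a / p) (b / p) hdiv.symm ?_ σ
      intro τ
      have := h (τ + 1)
      rwa [digit_succ, digit_succ] at this

/-- Lucas-type characterization of nondivisibility of a multinomial coefficient. -/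
lemma not_dvd_multinomial_iff (hp : p.Prime) {α : Type*} [DecidableEq α] (s : Finset α)
    (f : α → ℕ) :
    ¬ p ∣ Nat.multinomial s f ↔
      ∀ σ, ∑ i ∈ s, digit p (f i) σ = digit p (∑ i ∈ s, f i) σ := by
  induction s using Finset.cons_induction with
  | empty => simp [digit, Nat.Prime.ne_one hp]
  | cons a s ha ih =>
    rw [Nat.multinomial_cons, hp.dvd_mul, Finset.sum_cons]
    simp only [not_or]
    have key : (¬ p ∣ (f a + ∑ i ∈ s, f i).choose (f a)) ∧ (∀ σ, ∑ i ∈ s, digit p (f i) σ = digit p (∑ i ∈ s, f i) σ)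
        ↔ ∀ σ, digit p (f a) σ + ∑ i ∈ s, digit p (f i) σ = digit p (f a + ∑ i ∈ s, f i) σ := by
      constructor
      · rintro ⟨h1, h2⟩ σ
        rw [not_dvd_choose_iff hp] at h1
        have := digit_add_of_le hp.one_lt _ (f a) (∑ i ∈ s, f i) rfl h1 σ
        rw [h2 σ, this]
      · intro h
        have hle : ∀ σ, digit p (f a) σ ≤ digit p (f a + ∑ i ∈ s, f i) σ := by
          intro σ; have := h σ; omega
        have hcf := digit_add_of_le hp.one_lt _ (f a) (∑ i ∈ s, f i) rfl hle
        refine ⟨(not_dvd_choose_iff hp _ _).mpr hle, fun σ => ?_⟩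
        have h1 := h σ
        have h2 := hcf σ
        omega
    simp only [Finset.sum_cons]
    rw [← key, and_congr_right_iff]
    intro _
    exact ih


lemma digit_lt' (hp : 1 < p) (x σ : ℕ) : digit p x σ < p := Nat.mod_lt _ (by omega)

lemma sum_digit_mul_pow (hp : 1 < p) : ∀ (n x : ℕ), x < p ^ n →
    ∑ σ ∈ Finset.range n, digit p x σ * p ^ σ = x := by
  intro n
  induction n with
  | zero => intro x hx; simp at hx; simp [hx]
  | succ n ih =>
    intro x hx
    rw [Finset.sum_range_succ']
    simp only [digit_succ, digit_zero_left, pow_succ, pow_zero, mul_one]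
    have h1 : ∀ σ, digit p (x / p) σ * (p ^ σ * p) = (digit p (x / p) σ * p ^ σ) * p := by
      intro σ; ring
    simp only [h1, ← Finset.sum_mul]
    rw [ih (x / p) (by
      apply Nat.div_lt_of_lt_mul
      rw [← pow_succ'] at *
      exact hx)]
    exact Nat.div_add_mod' x p

lemma sum_mul_pow_lt (hp : 1 < p) {n : ℕ} {f : ℕ → ℕ} (hf : ∀ σ < n, f σ < p) :
    ∑ σ ∈ Finset.range n, f σ * p ^ σ < p ^ n := by
  induction n with
  | zero => simpa using Nat.pos_pow_of_pos 0 (by omega : 0 < p)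
  | succ n ih =>
    rw [Finset.sum_range_succ, pow_succ]
    have h1 : ∑ σ ∈ Finset.range n, f σ * p ^ σ < p ^ n := ih (fun σ hσ => hf σ (by omega))
    have h2 : f n ≤ p - 1 := by have := hf n (by omega); omega
    have : f n * p ^ n ≤ (p - 1) * p ^ n := Nat.mul_le_mul_right _ h2
    have hpn : 0 < p ^ n := Nat.pow_pos (by omega)
    calc ∑ σ ∈ Finset.range n, f σ * p ^ σ + f n * p ^ n
        < p ^ n + (p - 1) * p ^ n := by omega
      _ = p ^ n * p := by
          have : 0 < p := by omega
          cases p with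
          | zero => omega
          | succ q => simp [Nat.succ_sub_one]; ring

lemma digit_sum_mul_pow (hp : 1 < p) : ∀ (n : ℕ) (f : ℕ → ℕ), (∀ σ < n, f σ < p) →
    ∀ τ < n, digit p (∑ σ ∈ Finset.range n, f σ * p ^ σ) τ = f τ := by
  intro n
  induction n with
  | zero => omega
  | succ n ih =>
    intro f hf τ hτ
    rw [Finset.sum_range_succ']
    simp only [pow_zero, mul_one]
    have hdiv : (∑ σ ∈ Finset.range n, f (σ + 1) * p ^ (σ + 1) + f 0) / p
        = ∑ σ ∈ Finset.range n, f (σ + 1) * p ^ σ := by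
      have : ∀ σ, f (σ + 1) * p ^ (σ + 1) = (f (σ + 1) * p ^ σ) * p := by
        intro σ; rw [pow_succ]; ring
      simp only [this, ← Finset.sum_mul]
      rw [add_comm, Nat.add_mul_div_right _ _ (by omega : 0 < p),
        Nat.div_eq_of_lt (hf 0 (by omega)), zero_add]
    cases τ with
    | zero =>
      rw [digit_zero_left]
      have : ∀ σ, f (σ + 1) * p ^ (σ + 1) = p * (f (σ + 1) * p ^ σ) := by
        intro σ; rw [pow_succ]; ring
      simp only [this, ← Finset.mul_sum]
      rw [Nat.mul_add_mod, Nat.mod_eq_of_lt (hf 0 (by omega))]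
    | succ τ =>
      rw [digit_succ, hdiv, ih (fun σ => f (σ + 1)) (fun σ hσ => hf (σ+1) (by omega)) τ (by omega)]

lemma card_antidiagonalTuple (k n : ℕ) :
    (Finset.Nat.antidiagonalTuple (k + 1) n).card = (k + n).choose n := by
  classical
  rw [← Finset.piAntidiag_univ_fin_eq_antidiagonalTuple n (k + 1),
    ← Finset.map_sym_eq_piAntidiag, Finset.card_map, Finset.sym_univ, Finset.card_univ,
    Sym.card_sym_eq_choose]
  rw [Fintype.card_fin]
  congr 1
  omega

open Finset in
lemma card_filter_not_dvd (hp : p.Prime) (m t : ℕ) :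
    ((Finset.Nat.antidiagonalTuple (m + 1) t).filter
        (fun f => ¬ p ∣ Nat.multinomial Finset.univ f)).card
      = ∏ σ ∈ Finset.range (t + 1), (m + digit p t σ).choose (digit p t σ) := by
  classical
  have hp1 : 1 < p := hp.one_lt
  have htlt : t < p ^ (t + 1) :=
    lt_of_lt_of_le (Nat.lt_two_pow_self (n := t))
      (le_trans (Nat.pow_le_pow_right (by omega) (by omega)) (Nat.pow_le_pow_left hp.two_le _))
  have hBcard : ((Finset.range (t + 1)).pi
      (fun σ => Finset.Nat.antidiagonalTuple (m + 1) (digit p t σ))).card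
      = ∏ σ ∈ Finset.range (t + 1), (m + digit p t σ).choose (digit p t σ) := by
    rw [Finset.card_pi]
    exact Finset.prod_congr rfl fun σ _ => card_antidiagonalTuple m (digit p t σ)
  rw [← hBcard]
  · refine Finset.card_bij (fun f _ => fun σ _ i => digit p (f i) σ) ?_ ?_ ?_
    · -- maps into pi
      rintro f hf
      rw [Finset.mem_filter, Finset.Nat.mem_antidiagonalTuple] at hf
      rw [Finset.mem_pi]
      intro σ hσ
      rw [Finset.Nat.mem_antidiagonalTuple]
      have := (not_dvd_multinomial_iff hp Finset.univ f).mp hf.2 σ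
      rwa [hf.1] at this
    · -- injective
      intro f hf g hg hfg
      funext i
      rw [Finset.mem_filter, Finset.Nat.mem_antidiagonalTuple] at hf hg
      have hfi : f i < p ^ (t + 1) := lt_of_le_of_lt
        (hf.1 ▸ Finset.single_le_sum (f := fun j => f j) (fun j _ => Nat.zero_le _)
          (Finset.mem_univ i)) htlt
      have hgi : g i < p ^ (t + 1) := lt_of_le_of_lt
        (hg.1 ▸ Finset.single_le_sum (f := fun j => g j) (fun j _ => Nat.zero_le _)
          (Finset.mem_univ i)) htlt
      rw [← sum_digit_mul_pow hp1 (t + 1) (f i) hfi, ← sum_digit_mul_pow hp1 (t + 1) (g i) hgi]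
      refine Finset.sum_congr rfl fun σ hσ => ?_
      have h3 := congr_fun (congr_fun (congr_fun hfg σ) hσ) i
      exact congrArg (· * p ^ σ) h3
    · -- surjective
      intro g hg
      rw [Finset.mem_pi] at hg
      set g' : ℕ → Fin (m + 1) → ℕ := fun σ i =>
        if h : σ ∈ Finset.range (t + 1) then g σ h i else 0 with hg'
      have hgsum : ∀ σ < t + 1, ∑ i, g' σ i = digit p t σ := by
        intro σ hσ
        have := hg σ (Finset.mem_range.mpr hσ)
        rw [Finset.Nat.mem_antidiagonalTuple] at this
        simp only [hg', dif_pos (Finset.mem_range.mpr hσ)]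
        exact this
      have hglt : ∀ σ < t + 1, ∀ i, g' σ i < p := by
        intro σ hσ i
        have h1 : g' σ i ≤ ∑ j, g' σ j :=
          Finset.single_le_sum (f := fun j => g' σ j) (fun j _ => Nat.zero_le _) (Finset.mem_univ i)
        rw [hgsum σ hσ] at h1
        exact lt_of_le_of_lt h1 (digit_lt' hp1 t σ)
      set f : Fin (m + 1) → ℕ := fun i => ∑ σ ∈ Finset.range (t + 1), g' σ i * p ^ σ with hfdef
      have hflt : ∀ i, f i < p ^ (t + 1) := fun i =>
        sum_mul_pow_lt hp1 (fun σ hσ => hglt σ hσ i)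
      have hfdig : ∀ i, ∀ σ < t + 1, digit p (f i) σ = g' σ i := by
        intro i σ hσ
        exact digit_sum_mul_pow hp1 (t + 1) (fun σ => g' σ i) (fun σ hσ => hglt σ hσ i) σ hσ
      have hfsum : ∑ i, f i = t := by
        rw [hfdef]
        simp only
        rw [Finset.sum_comm]
        have : ∀ σ ∈ Finset.range (t + 1), ∑ i, g' σ i * p ^ σ = digit p t σ * p ^ σ := by
          intro σ hσ
          rw [← Finset.sum_mul, hgsum σ (Finset.mem_range.mp hσ)]
        rw [Finset.sum_congr rfl this, sum_digit_mul_pow hp1 (t + 1) t htlt]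
      have hdigall : ∀ σ, ∑ i, digit p (f i) σ = digit p t σ := by
        intro σ
        by_cases hσ : σ < t + 1
        · rw [Finset.sum_congr rfl (fun i _ => hfdig i σ hσ)]
          exact hgsum σ hσ
        · push_neg at hσ
          have h1 : ∀ i, digit p (f i) σ = 0 := fun i =>
            digit_eq_zero_of_lt (lt_of_lt_of_le (hflt i) (Nat.pow_le_pow_right hp.pos hσ))
          have h2 : digit p t σ = 0 :=
            digit_eq_zero_of_lt (lt_of_lt_of_le htlt (Nat.pow_le_pow_right hp.pos hσ))
          simp [h1, h2]
      refine ⟨f, ?_, ?_⟩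
      · rw [Finset.mem_filter, Finset.Nat.mem_antidiagonalTuple]
        refine ⟨hfsum, ?_⟩
        rw [not_dvd_multinomial_iff hp]
        rwa [hfsum]
      · funext σ hσ i
        show digit p (f i) σ = g σ hσ i
        rw [hfdig i σ (Finset.mem_range.mp hσ)]
        exact dif_pos hσ


section LinearAlgebra

variable {F : Type} [Field F] {m t : ℕ}

lemma veroForm_apply (a : Fin (m + 1) → F) (x : VeroIdx m t → F) :
    veroForm F m t a x
      = ∑ e : VeroIdx m t, (Nat.multinomial Finset.univ e.1 : F) * (∏ i, a i ^ e.1 i) * x e := by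
  simp [veroForm, LinearMap.sum_apply, LinearMap.smul_apply, LinearMap.proj_apply,
    smul_eq_mul, mul_assoc]

lemma mem_veroNucleus (x : VeroIdx m t → F) :
    x ∈ veroNucleus F m t ↔ ∀ a : Fin (m + 1) → F, a ≠ 0 → veroForm F m t a x = 0 := by
  simp [veroNucleus, Submodule.mem_iInf, LinearMap.mem_ker]

lemma single_mem (i : Fin (m + 1)) :
    Pi.single i t ∈ Finset.Nat.antidiagonalTuple (m + 1) t := by
  rw [Finset.Nat.mem_antidiagonalTuple]
  rw [Finset.sum_pi_single']
  simp

lemma multinomial_single (i : Fin (m + 1)) :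
    Nat.multinomial Finset.univ (Pi.single i t : Fin (m + 1) → ℕ) = 1 := by
  rw [Nat.multinomial]
  rw [Finset.sum_pi_single']
  simp only [Finset.mem_univ, if_true]
  have : ∏ j, Nat.factorial ((Pi.single i t : Fin (m + 1) → ℕ) j) = Nat.factorial t := by
    rw [Finset.prod_eq_single i]
    · simp
    · intro j _ hj
      simp [Pi.single_eq_of_ne hj]
    · simp
  rw [this, Nat.div_self (Nat.factorial_pos t)]

lemma eq_single_of_apply_eq (e : VeroIdx m t) (i : Fin (m + 1)) (h : e.1 i = t) :
    e.1 = Pi.single i t := by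
  have hsum : ∑ j, e.1 j = t := Finset.Nat.mem_antidiagonalTuple.mp e.2
  have hrest : ∑ j ∈ Finset.univ.erase i, e.1 j = 0 := by
    have := Finset.add_sum_erase Finset.univ e.1 (Finset.mem_univ i)
    omega
  funext j
  rcases eq_or_ne j i with rfl | hj
  · rw [Pi.single_eq_same, h]
  · rw [Pi.single_eq_of_ne hj]
    exact (Finset.sum_eq_zero_iff.mp hrest) j (Finset.mem_erase.mpr ⟨hj, Finset.mem_univ j⟩)

lemma apply_single_eq_zero (ht : 1 ≤ t) {x : VeroIdx m t → F} (hx : x ∈ veroNucleus F m t)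
    (i : Fin (m + 1)) : x ⟨Pi.single i t, single_mem i⟩ = 0 := by
  have hne : (Pi.single i (1 : F) : Fin (m + 1) → F) ≠ 0 := by
    intro h
    have := congr_fun h i
    simp at this
  have h0 := (mem_veroNucleus x).mp hx _ hne
  rw [veroForm_apply] at h0
  rw [Finset.sum_eq_single (⟨Pi.single i t, single_mem i⟩ : VeroIdx m t)] at h0
  · rw [multinomial_single] at h0
    have hprod : (∏ j, (Pi.single i (1 : F) : Fin (m + 1) → F) j ^ (Pi.single i t : Fin (m + 1) → ℕ) j) = 1 := by
      apply Finset.prod_eq_one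
      intro j _
      rcases eq_or_ne j i with rfl | hj
      · simp
      · rw [Pi.single_eq_of_ne hj, Pi.single_eq_of_ne hj, pow_zero]
    rw [hprod] at h0
    simpa using h0
  · intro e _ hne'
    have : ∃ j, j ≠ i ∧ e.1 j ≠ 0 := by
      by_contra hno
      push_neg at hno
      have hei : e.1 i = t := by
        have hsum : ∑ j, e.1 j = t := Finset.Nat.mem_antidiagonalTuple.mp e.2
        rw [Finset.sum_eq_single i] at hsum
        · exact hsum
        · intro j _ hj; exact hno j hj
        · simp
      exact hne' (Subtype.ext (eq_single_of_apply_eq e i hei))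
    obtain ⟨j, hj, hj0⟩ := this
    have : (Pi.single i (1 : F) : Fin (m + 1) → F) j ^ e.1 j = 0 := by
      rw [Pi.single_eq_of_ne hj, zero_pow hj0]
    rw [Finset.prod_eq_zero (Finset.mem_univ j) this]
    ring
  · simp

open MvPolynomial in
lemma mem_veroNucleus_iff (ht : 1 ≤ t) (hF : (t : Cardinal) ≤ Cardinal.mk F)
    (x : VeroIdx m t → F) :
    x ∈ veroNucleus F m t ↔
      ∀ e : VeroIdx m t, (Nat.multinomial Finset.univ e.1 : F) ≠ 0 → x e = 0 := by
  constructor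
  · intro hx
    set c : VeroIdx m t → F := fun e => (Nat.multinomial Finset.univ e.1 : F) * x e with hc
    set P : MvPolynomial (Fin (m + 1)) F :=
      ∑ e : VeroIdx m t, monomial (Finsupp.equivFunOnFinite.symm e.1) (c e) with hP
    have heval : ∀ a : Fin (m + 1) → F, eval a P = veroForm F m t a x := by
      intro a
      rw [hP, map_sum, veroForm_apply]
      refine Finset.sum_congr rfl fun e _ => ?_
      rw [eval_monomial]
      rw [Finsupp.prod_fintype _ _ (fun i => pow_zero (a i))]
      simp only [Finsupp.equivFunOnFinite_symm_apply_apply]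
      ring
    have hall : ∀ a : Fin (m + 1) → F, eval a P = 0 := by
      intro a
      rcases eq_or_ne a 0 with rfl | ha
      · rw [heval, veroForm_apply]
        apply Finset.sum_eq_zero
        intro e _
        have : ∃ j, e.1 j ≠ 0 := by
          by_contra hno
          push_neg at hno
          have hsum : ∑ j, e.1 j = t := Finset.Nat.mem_antidiagonalTuple.mp e.2
          simp [hno] at hsum
          omega
        obtain ⟨j, hj⟩ := this
        rw [Finset.prod_eq_zero (Finset.mem_univ j) (by simp [zero_pow hj])]
        ring
      · rw [heval]
        exact (mem_veroNucleus x).mp hx a ha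
    have hcoeff : ∀ e : VeroIdx m t, coeff (Finsupp.equivFunOnFinite.symm e.1) P = c e := by
      intro e
      rw [hP, coeff_sum]
      rw [Finset.sum_eq_single e]
      · rw [coeff_monomial, if_pos rfl]
      · intro e' _ hne
        rw [coeff_monomial, if_neg]
        intro h
        exact hne (Subtype.ext (Finsupp.equivFunOnFinite.symm.injective h))
      · simp
    have hPzero : P = 0 := by
      rcases finite_or_infinite F with hfin | hinf
      · have := Fintype.ofFinite F
        have hcard : t ≤ Fintype.card F := by
          rw [Cardinal.mk_fintype] at hF
          exact_mod_cast hF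
        apply eq_zero_of_eval_eq_zero (Fin (m + 1)) F P hall
        rw [mem_restrictDegree]
        intro s hs i
        rw [mem_support_iff] at hs
        have hex : ∃ e : VeroIdx m t, Finsupp.equivFunOnFinite.symm e.1 = s := by
          by_contra hno
          push_neg at hno
          apply hs
          rw [hP, coeff_sum]
          apply Finset.sum_eq_zero
          intro e _
          rw [coeff_monomial, if_neg (hno e)]
        obtain ⟨e, rfl⟩ := hex
        rw [hcoeff] at hs
        have hle : e.1 i ≤ t := by
          have hsum : ∑ j, e.1 j = t := Finset.Nat.mem_antidiagonalTuple.mp e.2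
          have h1 := Finset.single_le_sum (f := fun j => e.1 j) (fun j _ => Nat.zero_le _)
            (Finset.mem_univ i)
          simpa [hsum] using h1
        have hlt : e.1 i ≤ t - 1 := by
          rcases lt_or_eq_of_le hle with h | h
          · omega
          · exfalso
            have he := eq_single_of_apply_eq e i h
            have : x e = 0 := by
              have := apply_single_eq_zero ht hx i
              have heq : e = ⟨Pi.single i t, single_mem i⟩ := Subtype.ext he
              rw [heq]
              exact this
            apply hs
            rw [hc]
            simp [this]
        have : (Finsupp.equivFunOnFinite.symm e.1) i = e.1 i := rfl
        omega
      · exact MvPolynomial.funext (fun a => by rw [hall, map_zero])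
    intro e hmult
    have := hcoeff e
    rw [hPzero, coeff_zero] at this
    have : c e = 0 := this.symm
    rw [hc] at this
    simp only at this
    rcases mul_eq_zero.mp this with h | h
    · exact absurd h hmult
    · exact h
  · intro h
    rw [mem_veroNucleus]
    intro a _
    rw [veroForm_apply]
    apply Finset.sum_eq_zero
    intro e _
    rcases eq_or_ne ((Nat.multinomial Finset.univ e.1 : F)) 0 with h0 | h0
    · rw [h0]; ring
    · rw [h e h0]; ring

/-- Restriction to the coordinates with vanishing multinomial coefficient, as a linear map. -/
noncomputable def restrictMap :
    veroNucleus F m t →ₗ[F] ({e : VeroIdx m t // (Nat.multinomial Finset.univ e.1 : F) = 0} → F) where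
  toFun x := fun z => x.1 z.1
  map_add' x y := rfl
  map_smul' a x := rfl

lemma restrictMap_bijective (ht : 1 ≤ t) (hF : (t : Cardinal) ≤ Cardinal.mk F) :
    Function.Bijective (restrictMap (F := F) (m := m) (t := t)) := by
  constructor
  · intro x y hxy
    ext e
    rcases eq_or_ne ((Nat.multinomial Finset.univ e.1 : F)) 0 with h0 | h0
    · exact congr_fun hxy ⟨e, h0⟩
    · rw [(mem_veroNucleus_iff ht hF x.1).mp x.2 e h0,
        (mem_veroNucleus_iff ht hF y.1).mp y.2 e h0]
  · intro y
    classical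
    refine ⟨⟨fun e => if h : (Nat.multinomial Finset.univ e.1 : F) = 0 then y ⟨e, h⟩ else 0, ?_⟩, ?_⟩
    · rw [mem_veroNucleus_iff ht hF]
      intro e hmult
      exact dif_neg hmult
    · funext z
      exact dif_pos z.2

end LinearAlgebra

end VeroAux

/-- Over a field of characteristic `p > 0` with `#F ≥ t`, the `(m−1, t−1)`-nucleus of
the Veronese variety `V_m^t` has projective dimension
`C(m+t, t) − ∏_σ C(m + t_σ, t_σ) − 1`, i.e. vector-space dimension
`C(m+t, t) − ∏_σ C(m + t_σ, t_σ)`, where `t_σ` are the base-`p` digits of `t`.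
(Digits with index `σ > t` vanish and `C(m+0,0) = 1`, so the product over `σ < t+1`
is the full product.) -/
theorem veroNucleus_finrank (F : Type) [Field F] (p : ℕ) (hp : p.Prime) [CharP F p]
    (m t : ℕ) (hm : 1 ≤ m) (ht : 2 ≤ t) (hF : (t : Cardinal) ≤ Cardinal.mk F) :
    Module.finrank F (veroNucleus F m t)
      = Nat.choose (m + t) t -
          ∏ σ ∈ Finset.range (t + 1), Nat.choose (m + digit p t σ) (digit p t σ) := by
  classical
  have ht1 : 1 ≤ t := by omega
  have hequiv : veroNucleus F m t ≃ₗ[F]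
      ({e : VeroIdx m t // (Nat.multinomial Finset.univ e.1 : F) = 0} → F) :=
    LinearEquiv.ofBijective _ (VeroAux.restrictMap_bijective ht1 hF)
  rw [LinearEquiv.finrank_eq hequiv, Module.finrank_fintype_fun_eq_card, Fintype.card_subtype]
  have hfc : Finset.univ.filter (fun e : VeroIdx m t => (Nat.multinomial Finset.univ e.1 : F) = 0)
      = Finset.univ.filter (fun e : VeroIdx m t => p ∣ Nat.multinomial Finset.univ e.1) := by
    apply Finset.filter_congr
    intro e _
    exact CharP.cast_eq_zero_iff F p _
  rw [hfc]
  have hsplit := Finset.card_filter_add_card_filter_not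
    (s := (Finset.univ : Finset (VeroIdx m t)))
    (p := fun e => p ∣ Nat.multinomial Finset.univ e.1)
  have htot : (Finset.univ : Finset (VeroIdx m t)).card = Nat.choose (m + t) t := by
    rw [Finset.card_univ]
    rw [show Fintype.card (VeroIdx m t)
        = (Finset.Nat.antidiagonalTuple (m + 1) t).card from Fintype.card_coe _]
    rw [VeroAux.card_antidiagonalTuple]
  have hcards : (Finset.univ.filter
        (fun e : VeroIdx m t => ¬ p ∣ Nat.multinomial Finset.univ e.1)).card
      = ((Finset.Nat.antidiagonalTuple (m + 1) t).filter
          (fun f => ¬ p ∣ Nat.multinomial Finset.univ f)).card := by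
    apply Finset.card_bij (fun e _ => e.1)
    · intro e he
      rw [Finset.mem_filter] at he ⊢
      exact ⟨e.2, he.2⟩
    · intro e _ e' _ h
      exact Subtype.ext h
    · intro f hf
      rw [Finset.mem_filter] at hf
      exact ⟨⟨f, hf.1⟩, Finset.mem_filter.mpr ⟨Finset.mem_univ _, hf.2⟩, rfl⟩
  rw [VeroAux.card_filter_not_dvd hp m t] at hcards
  omega
end
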